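/- arXiv:2604.16288 — 6 statements merged into one kernel-verified Lean document; each statement's English description precedes it below -/
import Mathlib

section
/- Let n ≥ 0 be an integer, c ∈ [0,1), and define q_{c,n}(θ) = (1−c²)/(1+c²−2c cos(2π(n+1)θ)) for θ ∈ 𝕋. Then q_{c,n} is a probability density on 𝕋, its entropy equals ∫_𝕋 q_{c,n} log q_{c,n} dθ = −log(1−c²), and (n+1) Σ_{k=1}^∞ (1/k) |q̂_{c,n}(k)|² = −log(1−c²); in particular, equality holds for q_{c,n} in the inequality ∫_𝕋 q log q dθ ≥ (n+1) Σ_{k=1}^∞ (1/k) |q̂(k)|². -/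
open MeasureTheory Real Complex
open scoped Real

noncomputable section

/-- The normalized Haar (Lebesgue) probability measure on the circle `𝕋 = ℝ/ℤ`. -/
def circleMeasure : Measure UnitAddCircle := AddCircle.haarAddCircle

/-- The wrapped Poisson-kernel density
`q_{c,n}(θ) = (1−c²)/(1+c²−2c cos(2π(n+1)θ))`, where `cos(2π(n+1)θ)` is realized as
the real part of `e^{2πi(n+1)θ}` on the circle. -/
def qcn (n : ℕ) (c : ℝ) (θ : UnitAddCircle) : ℝ :=
  (1 - c ^ 2) / (1 + c ^ 2 - 2 * c * (fourier ((n : ℤ) + 1) θ).re)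

namespace QcnAux


variable {c : ℝ}

lemma norm_fourier_apply (m : ℤ) (θ : UnitAddCircle) : ‖(fourier m θ : ℂ)‖ = 1 :=
  Circle.norm_coe _

lemma normSq_one_sub_mul {z : ℂ} (hz : ‖z‖ = 1) (c : ℝ) :
    Complex.normSq (1 - c * z) = 1 + c ^ 2 - 2 * c * z.re := by
  have h : z.re ^ 2 + z.im ^ 2 = 1 := by
    have := hz
    have h2 : Complex.normSq z = 1 := by
      rw [← Complex.sq_norm, this, one_pow]
    rw [Complex.normSq_apply] at h2
    nlinarith [h2]
  simp only [Complex.normSq_apply, Complex.sub_re, Complex.sub_im, Complex.mul_re,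
    Complex.mul_im, Complex.ofReal_re, Complex.ofReal_im, Complex.one_re, Complex.one_im]
  nlinarith [h]

lemma denom_pos (hc0 : 0 ≤ c) (hc1 : c < 1) {z : ℂ} (hz : ‖z‖ = 1) :
    0 < 1 + c ^ 2 - 2 * c * z.re := by
  have h1 : |z.re| ≤ 1 := by
    have := Complex.abs_re_le_norm z
    rwa [hz] at this
  rcases abs_le.1 h1 with ⟨hl, hr⟩
  nlinarith [sq_nonneg (1 - c)]

lemma one_sub_ne (hc0 : 0 ≤ c) (hc1 : c < 1) {z : ℂ} (hz : ‖z‖ = 1) :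
    (1 : ℂ) - c * z ≠ 0 := by
  intro h
  have : ‖(c : ℂ) * z‖ = 1 := by
    have : (1 : ℂ) = c * z := by linear_combination h
    rw [← this, norm_one]
  rw [norm_mul, hz, mul_one, Complex.norm_real, Real.norm_eq_abs, _root_.abs_of_nonneg hc0] at this
  exact absurd this (by linarith)

lemma hasSum_q_pointwise (hc0 : 0 ≤ c) (hc1 : c < 1) {z : ℂ} (hz : ‖z‖ = 1) :
    HasSum (fun k : ℤ => (c : ℂ) ^ k.natAbs * z ^ k)
      (((1 : ℝ) - c ^ 2) / (Complex.normSq (1 - c * z))) := by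
  have hz0 : z ≠ 0 := by intro h; simp [h] at hz
  have hnorm : ‖(c : ℂ) * z‖ < 1 := by
    rw [norm_mul, hz, mul_one, Complex.norm_real, Real.norm_eq_abs, _root_.abs_of_nonneg hc0]
    exact hc1
  have hnorm' : ‖(c : ℂ) * z⁻¹‖ < 1 := by
    rw [norm_mul, norm_inv, hz, inv_one, mul_one, Complex.norm_real, Real.norm_eq_abs,
      _root_.abs_of_nonneg hc0]
    exact hc1
  have h1 : HasSum (fun m : ℕ => ((c : ℂ) * z) ^ m) ((1 - c * z)⁻¹) :=
    hasSum_geometric_of_norm_lt_one hnorm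
  have h2 : HasSum (fun m : ℕ => ((c : ℂ) * z⁻¹) ^ m) ((1 - c * z⁻¹)⁻¹) :=
    hasSum_geometric_of_norm_lt_one hnorm'
  have h2' : HasSum (fun m : ℕ => ((c : ℂ) * z⁻¹) * ((c : ℂ) * z⁻¹) ^ m)
      (((c : ℂ) * z⁻¹) * (1 - c * z⁻¹)⁻¹) := h2.mul_left _
  have key : HasSum (fun k : ℤ => (c : ℂ) ^ k.natAbs * z ^ k)
      ((1 - c * z)⁻¹ + ((c : ℂ) * z⁻¹) * (1 - c * z⁻¹)⁻¹) := by
    apply HasSum.of_nat_of_neg_add_one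
    · convert h1 using 2 with m
      rw [Int.natAbs_natCast, zpow_natCast, mul_pow]
    · convert h2' using 2 with m
      have : (-((m : ℤ) + 1)).natAbs = m + 1 := by omega
      rw [this, zpow_neg, show ((m:ℤ)+1) = ((m+1 : ℕ):ℤ) by push_cast; ring,
        zpow_natCast, ← inv_pow, ← mul_pow, pow_succ']
  convert key using 1
  have hcz : (1 : ℂ) - c * z ≠ 0 := one_sub_ne hc0 hc1 hz
  have hcz' : (1 : ℂ) - c * z⁻¹ ≠ 0 := by
    have : ‖z⁻¹‖ = 1 := by rw [norm_inv, hz, inv_one]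
    exact one_sub_ne hc0 hc1 this
  have hconj : (Complex.normSq (1 - c * z) : ℂ) = (1 - c * z) * (1 - c * z⁻¹) := by
    rw [← Complex.mul_conj]
    congr 1
    rw [map_sub, map_one, map_mul, Complex.conj_ofReal]
    congr 1
    have hzz : z * (starRingEnd ℂ) z = 1 := by
      rw [Complex.mul_conj]
      norm_cast
      rw [← Complex.sq_norm, hz, one_pow]
    field_simp
    linear_combination (c : ℂ) * hzz
  have hzc : z - (c : ℂ) ≠ 0 := by
    intro h
    have hzc' : z = (c : ℂ) := by linear_combination h
    rw [hzc', Complex.norm_real, Real.norm_eq_abs, _root_.abs_of_nonneg hc0] at hz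
    exact absurd hz (by linarith)
  rw [hconj]
  push_cast
  field_simp
  ring_nf


lemma cont_integrable {E : Type*} [NormedAddCommGroup E] [NormedSpace ℝ E]
    {f : UnitAddCircle → E} (hf : Continuous f) :
    Integrable f (AddCircle.haarAddCircle) := by
  rw [← integrableOn_univ]
  exact hf.continuousOn.integrableOn_compact isCompact_univ

lemma fourier_zpow (N k : ℤ) (θ : UnitAddCircle) :
    fourier (k * N) θ = (fourier N θ : ℂ) ^ k := by
  have hz : (fourier N θ : ℂ) ≠ 0 := by
    intro h
    simpa [h] using norm_fourier_apply N θ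
  induction k using Int.induction_on with
  | zero => simpa using fourier_zero
  | succ k ih =>
      have : ((k : ℤ) + 1) * N = k * N + N := by ring
      rw [this, fourier_add, ih, zpow_add_one₀ hz]
  | pred k ih =>
      have : (-(k : ℤ) - 1) * N = -k * N + (-N) := by ring
      rw [this, fourier_add, ih, zpow_sub_one₀ hz]
      congr 1
      have h1 : (fourier (-N) θ : ℂ) * fourier N θ = 1 := by
        rw [← fourier_add]; simpa using fourier_zero
      field_simp at h1 ⊢
      linear_combination h1

lemma integral_fourier (m : ℤ) :
    ∫ θ : UnitAddCircle, fourier m θ ∂AddCircle.haarAddCircle = if m = 0 then 1 else 0 := by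
  split_ifs with h
  · subst h
    have : ⇑(fourier (T := (1:ℝ)) 0) = fun _ => (1 : ℂ) := by ext1 x; exact fourier_zero
    rw [this, integral_const, probReal_univ, one_smul]
  · exact integral_eq_zero_of_add_right_eq_neg (μ := AddCircle.haarAddCircle)
      (fourier_add_half_inv_index h one_pos)

variable {n : ℕ}


lemma hasSum_qcn (n : ℕ) (hc0 : 0 ≤ c) (hc1 : c < 1) (θ : UnitAddCircle) :
    HasSum (fun k : ℤ => (c : ℂ) ^ k.natAbs * fourier (k * ((n : ℤ) + 1)) θ)
      ((qcn n c θ : ℂ)) := by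
  have hz : ‖(fourier ((n : ℤ) + 1) θ : ℂ)‖ = 1 := norm_fourier_apply _ _
  have key := hasSum_q_pointwise hc0 hc1 hz
  have heq : (qcn n c θ : ℂ)
      = (((1 : ℝ) - c ^ 2) / (Complex.normSq (1 - c * fourier ((n : ℤ) + 1) θ)) : ℂ) := by
    rw [qcn, normSq_one_sub_mul hz]
    push_cast
    ring
  rw [heq]
  convert key using 2 with k
  rw [fourier_zpow]

lemma summable_c_natAbs (hc0 : 0 ≤ c) (hc1 : c < 1) :
    Summable (fun k : ℤ => c ^ k.natAbs) := by
  apply Summable.of_nat_of_neg_add_one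
  · simpa using summable_geometric_of_lt_one hc0 hc1
  · have : (fun m : ℕ => c ^ ((-((m : ℤ) + 1)).natAbs)) = fun m : ℕ => c * c ^ m := by
      ext m
      have : (-((m : ℤ) + 1)).natAbs = m + 1 := by omega
      rw [this, pow_succ']
    rw [this]
    exact (summable_geometric_of_lt_one hc0 hc1).mul_left c

lemma fourierCoeff_qcn (n : ℕ) (hc0 : 0 ≤ c) (hc1 : c < 1) (j : ℤ) :
    fourierCoeff (fun θ => (qcn n c θ : ℂ)) j =
      if ((n : ℤ) + 1) ∣ j then (c : ℂ) ^ ((j / ((n : ℤ) + 1)).natAbs) else 0 := by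
  set N : ℤ := (n : ℤ) + 1 with hNdef
  have hN : 0 < N := by positivity
  have step : ∀ θ : UnitAddCircle, fourier (-j) θ • (qcn n c θ : ℂ)
      = ∑' k : ℤ, (c : ℂ) ^ k.natAbs * fourier (k * N - j) θ := by
    intro θ
    rw [smul_eq_mul, ← (hasSum_qcn n hc0 hc1 θ).tsum_eq, ← tsum_mul_left]
    congr 1 with k
    rw [show k * N - j = -j + k * N by ring, fourier_add]
    ring
  have hint : ∀ k : ℤ,
      Integrable (fun θ : UnitAddCircle => (c : ℂ) ^ k.natAbs * fourier (k * N - j) θ)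
        AddCircle.haarAddCircle :=
    fun k => cont_integrable (continuous_const.mul (fourier (k * N - j)).continuous)
  have hnorm : ∀ k : ℤ,
      (∫ θ : UnitAddCircle, ‖(c : ℂ) ^ k.natAbs * fourier (k * N - j) θ‖
        ∂AddCircle.haarAddCircle) = c ^ k.natAbs := by
    intro k
    have : ∀ θ : UnitAddCircle, ‖(c : ℂ) ^ k.natAbs * fourier (k * N - j) θ‖ = c ^ k.natAbs := by
      intro θ
      rw [norm_mul, norm_fourier_apply, mul_one, norm_pow, Complex.norm_real,
        Real.norm_eq_abs, _root_.abs_of_nonneg hc0]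
    simp_rw [this]
    rw [integral_const, probReal_univ, smul_eq_mul, one_mul]
  have hsum : Summable (fun k : ℤ =>
      ∫ θ : UnitAddCircle, ‖(c : ℂ) ^ k.natAbs * fourier (k * N - j) θ‖
        ∂AddCircle.haarAddCircle) := by
    simp_rw [hnorm]
    exact summable_c_natAbs hc0 hc1
  have hswap := integral_tsum_of_summable_integral_norm hint hsum
  have hcoeff : fourierCoeff (fun θ => (qcn n c θ : ℂ)) j
      = ∑' k : ℤ, (c : ℂ) ^ k.natAbs *
          ∫ θ : UnitAddCircle, fourier (k * N - j) θ ∂AddCircle.haarAddCircle := by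
    rw [fourierCoeff]
    simp_rw [step]
    rw [← hswap]
    congr 1 with k
    rw [integral_const_mul]
  rw [hcoeff]
  simp_rw [integral_fourier, sub_eq_zero]
  split_ifs with hdiv
  · obtain ⟨d, hd⟩ := hdiv
    have hjd : j / N = d := by rw [hd, Int.mul_ediv_cancel_left _ hN.ne']
    rw [hjd]
    rw [tsum_eq_single d]
    · simp [hd, mul_comm]
    · intro k hk
      have : ¬ (k * N = j) := by
        rw [hd]
        intro h
        exact hk (by
          have := mul_right_cancel₀ hN.ne' (by linarith [h] : k * N = d * N)
          linarith [this])
      simp [this]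
  · have : ∀ k : ℤ, (c : ℂ) ^ k.natAbs * (if k * N = j then (1:ℂ) else 0) = 0 := by
      intro k
      have : ¬ (k * N = j) := fun h => hdiv ⟨k, by linarith [h]⟩
      simp [this]
    simp_rw [this]
    exact tsum_zero

lemma integral_qcn (n : ℕ) (hc0 : 0 ≤ c) (hc1 : c < 1) :
    ∫ θ, qcn n c θ ∂circleMeasure = 1 := by
  have h0 := fourierCoeff_qcn n hc0 hc1 0
  simp only [Int.dvd_zero, if_true] at h0
  rw [Int.zero_ediv] at h0
  simp only [Int.natAbs_zero, pow_zero] at h0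
  have hcoeff : fourierCoeff (fun θ => (qcn n c θ : ℂ)) 0
      = ∫ θ : UnitAddCircle, (qcn n c θ : ℂ) ∂AddCircle.haarAddCircle := by
    rw [fourierCoeff]
    congr 1 with θ
    simp [fourier_zero]
  rw [hcoeff] at h0
  rw [circleMeasure, ← RCLike.ofReal_inj (K := ℂ), ← integral_ofReal]
  exact h0


lemma qcn_pos (n : ℕ) (hc0 : 0 ≤ c) (hc1 : c < 1) (θ : UnitAddCircle) : 0 < qcn n c θ := by
  have hz : ‖(fourier ((n : ℤ) + 1) θ : ℂ)‖ = 1 := norm_fourier_apply _ _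
  have hd := denom_pos hc0 hc1 hz
  have hnum : 0 < 1 - c ^ 2 := by nlinarith
  exact div_pos hnum hd

lemma continuous_qcn (n : ℕ) (hc0 : 0 ≤ c) (hc1 : c < 1) : Continuous (qcn n c) := by
  apply Continuous.div continuous_const
  · exact continuous_const.sub ((continuous_const.mul
      (Complex.continuous_re.comp (fourier ((n : ℤ) + 1)).continuous)))
  · intro θ
    exact (denom_pos hc0 hc1 (norm_fourier_apply _ θ)).ne'

lemma entropy_qcn (n : ℕ) (hc0 : 0 ≤ c) (hc1 : c < 1) :
    ∫ θ, qcn n c θ * Real.log (qcn n c θ) ∂circleMeasure = -Real.log (1 - c ^ 2) := by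
  set N : ℤ := (n : ℤ) + 1 with hNdef
  set w : UnitAddCircle → ℂ := fun θ => 1 - (c : ℂ) * fourier N θ with hwdef
  have hnum : 0 < 1 - c ^ 2 := by nlinarith
  have hzn : ∀ θ, ‖(fourier N θ : ℂ)‖ = 1 := fun θ => norm_fourier_apply _ _
  have hw0 : ∀ θ, w θ ≠ 0 := fun θ => one_sub_ne hc0 hc1 (hzn θ)
  have hwre : ∀ θ, 0 < (w θ).re := by
    intro θ
    have h1 : |(fourier N θ : ℂ).re| ≤ 1 := by
      have := Complex.abs_re_le_norm (fourier N θ)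
      rwa [hzn θ] at this
    have : (w θ).re = 1 - c * (fourier N θ).re := by
      simp [hwdef, Complex.sub_re, Complex.mul_re]
    rw [this]
    rcases abs_le.1 h1 with ⟨hl, hr⟩
    nlinarith
  have hw_cont : Continuous w :=
    continuous_const.sub (continuous_const.mul (fourier N).continuous)
  have habs_pos : ∀ θ, 0 < ‖w θ‖ := fun θ => norm_pos_iff.mpr (hw0 θ)
  have hq_cont : Continuous (qcn n c) := continuous_qcn n hc0 hc1
  have hq_pos : ∀ θ, 0 < qcn n c θ := qcn_pos n hc0 hc1
  -- the pointwise identity for the logarithm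
  have hlog : ∀ θ, Real.log (qcn n c θ)
      = Real.log (1 - c ^ 2) - 2 * Real.log (‖w θ‖) := by
    intro θ
    have hd : 1 + c ^ 2 - 2 * c * (fourier N θ : ℂ).re = Complex.normSq (w θ) :=
      (normSq_one_sub_mul (hzn θ) c).symm
    have : qcn n c θ = (1 - c ^ 2) / Complex.normSq (w θ) := by
      rw [qcn, ← hd]
    rw [this, Real.log_div hnum.ne' (Complex.normSq_pos.mpr (hw0 θ)).ne', ← Complex.sq_norm, Real.log_pow]
    push_cast
    ring
  -- continuity of the log-abs term
  have hla_cont : Continuous (fun θ => Real.log (‖w θ‖)) :=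
    (continuous_norm.comp hw_cont).log (fun θ => (habs_pos θ).ne')
  have h_int1 : Integrable (fun θ => qcn n c θ * Real.log (1 - c ^ 2))
      AddCircle.haarAddCircle := cont_integrable (hq_cont.mul continuous_const)
  have h_int2 : Integrable (fun θ => qcn n c θ * (2 * Real.log (‖w θ‖)))
      AddCircle.haarAddCircle := cont_integrable (hq_cont.mul (continuous_const.mul hla_cont))
  have split : ∫ θ, qcn n c θ * Real.log (qcn n c θ) ∂circleMeasure
      = Real.log (1 - c ^ 2) * ∫ θ, qcn n c θ ∂AddCircle.haarAddCircle
        - 2 * ∫ θ, qcn n c θ * Real.log (‖w θ‖) ∂AddCircle.haarAddCircle := by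
    rw [circleMeasure]
    have : (fun θ => qcn n c θ * Real.log (qcn n c θ))
        = fun θ => qcn n c θ * Real.log (1 - c ^ 2)
            - qcn n c θ * (2 * Real.log (‖w θ‖)) := by
      ext θ
      rw [hlog θ]
      ring
    rw [this, integral_sub h_int1 h_int2]
    rw [integral_mul_const]
    congr 1
    · ring
    · rw [← integral_const_mul]
      congr 1 with θ
      ring
  -- the complex-analytic computation of the remaining integral
  have hF_cont : Continuous (fun θ => (qcn n c θ : ℂ) * Complex.log (w θ)) := by
    apply Continuous.mul
    · exact Complex.continuous_ofReal.comp hq_cont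
    · exact hw_cont.clog (fun θ => Complex.mem_slitPlane_iff.mpr (Or.inl (hwre θ)))
  have hF_int : Integrable (fun θ => (qcn n c θ : ℂ) * Complex.log (w θ))
      AddCircle.haarAddCircle := cont_integrable hF_cont
  -- the integral of q * log w
  have hkey : ∫ θ, (qcn n c θ : ℂ) * Complex.log (w θ) ∂AddCircle.haarAddCircle
      = Complex.log (1 - (c : ℂ) ^ 2) := by
    have hζ : ∀ θ : UnitAddCircle, ‖(c : ℂ) * fourier N θ‖ < 1 := by
      intro θ
      rw [norm_mul, hzn θ, mul_one, Complex.norm_real, Real.norm_eq_abs,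
        _root_.abs_of_nonneg hc0]
      exact hc1
    -- pointwise series for q * log w
    have hptwise : ∀ θ, (qcn n c θ : ℂ) * Complex.log (w θ)
        = -∑' m : ℕ, (qcn n c θ : ℂ) * (((c : ℂ) * fourier N θ) ^ m / m) := by
      intro θ
      have h := (Complex.hasSum_taylorSeries_neg_log (hζ θ)).mul_left ((qcn n c θ : ℂ))
      rw [h.tsum_eq]
      ring
    simp_rw [hptwise]
    rw [integral_neg]
    -- interchange sum and integral
    have hG_int : ∀ m : ℕ, Integrable
        (fun θ => (qcn n c θ : ℂ) * (((c : ℂ) * fourier N θ) ^ m / m))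
        AddCircle.haarAddCircle := by
      intro m
      apply cont_integrable
      exact (Complex.continuous_ofReal.comp hq_cont).mul
        (((continuous_const.mul (fourier N).continuous).pow m).div_const _)
    have hG_norm : ∀ (m : ℕ) (θ : UnitAddCircle),
        ‖(qcn n c θ : ℂ) * (((c : ℂ) * fourier N θ) ^ m / m)‖ ≤ qcn n c θ * c ^ m := by
      intro m θ
      have hq := (hq_pos θ).le
      simp only [norm_mul, norm_div, norm_pow, Complex.norm_real, Real.norm_eq_abs,
        Complex.norm_natCast, hzn θ, mul_one, _root_.abs_of_nonneg hc0,
        _root_.abs_of_nonneg hq]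
      rcases Nat.eq_zero_or_pos m with rfl | hm
      · simp only [pow_zero, Nat.cast_zero, div_zero, mul_zero, mul_one]
        exact hq
      · have : c ^ m / (m : ℝ) ≤ c ^ m := div_le_self (by positivity) (by exact_mod_cast hm)
        exact mul_le_mul_of_nonneg_left this hq
    have hG_sum : Summable (fun m : ℕ =>
        ∫ θ, ‖(qcn n c θ : ℂ) * (((c : ℂ) * fourier N θ) ^ m / m)‖
          ∂AddCircle.haarAddCircle) := by
      apply Summable.of_nonneg_of_le
        (fun m => integral_nonneg (fun θ => norm_nonneg _))
        (fun m => ?_) ((summable_geometric_of_lt_one hc0 hc1))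
      calc ∫ θ, ‖(qcn n c θ : ℂ) * (((c : ℂ) * fourier N θ) ^ m / m)‖
            ∂AddCircle.haarAddCircle
          ≤ ∫ θ, qcn n c θ * c ^ m ∂AddCircle.haarAddCircle := by
            apply integral_mono ((hG_int m).norm) ?_ (hG_norm m)
            exact cont_integrable (hq_cont.mul continuous_const)
        _ = c ^ m := by
            rw [integral_mul_const, ← circleMeasure, integral_qcn n hc0 hc1, one_mul]
    rw [← integral_tsum_of_summable_integral_norm hG_int hG_sum]
    -- compute each integral
    have hterm : ∀ m : ℕ,
        ∫ θ, (qcn n c θ : ℂ) * (((c : ℂ) * fourier N θ) ^ m / m) ∂AddCircle.haarAddCircle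
        = ((c : ℂ) ^ 2) ^ m / m := by
      intro m
      have hfp : ∀ θ : UnitAddCircle, ((fourier N θ : ℂ)) ^ m = fourier ((m : ℤ) * N) θ := by
        intro θ
        rw [fourier_zpow, zpow_natCast]
      have : (fun θ : UnitAddCircle => (qcn n c θ : ℂ) * (((c : ℂ) * fourier N θ) ^ m / m))
          = fun θ => ((c : ℂ) ^ m / m) * (fourier (-(-((m : ℤ) * N))) θ • (qcn n c θ : ℂ)) := by
        ext θ
        rw [neg_neg, smul_eq_mul, mul_pow, ← hfp θ]
        ring
      rw [this, integral_const_mul]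
      have := fourierCoeff_qcn n hc0 hc1 (-((m : ℤ) * N))
      rw [fourierCoeff] at this
      rw [this]
      have hdvd : N ∣ -((m : ℤ) * N) := ⟨-m, by ring⟩
      rw [if_pos hdvd]
      have hdiv : -((m : ℤ) * N) / N = -(m : ℤ) := by
        rw [Int.neg_ediv_of_dvd ⟨m, by ring⟩, Int.mul_ediv_cancel _ (by positivity : (0:ℤ) < N).ne']
      rw [hdiv]
      have : (-(m : ℤ)).natAbs = m := by omega
      rw [this]
      ring
    simp_rw [hterm]
    -- sum the series
    have hc2 : ‖((c : ℂ) ^ 2)‖ < 1 := by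
      rw [norm_pow, Complex.norm_real, Real.norm_eq_abs, _root_.abs_of_nonneg hc0]
      nlinarith
    have hsum2 := Complex.hasSum_taylorSeries_neg_log hc2
    rw [hsum2.tsum_eq, neg_neg]
  -- take real parts
  have hre : ∫ θ, qcn n c θ * Real.log (‖w θ‖) ∂AddCircle.haarAddCircle
      = Real.log (1 - c ^ 2) := by
    have h1 : (fun θ => qcn n c θ * Real.log (‖w θ‖))
        = fun θ => ((qcn n c θ : ℂ) * Complex.log (w θ)).re := by
      ext θ
      rw [Complex.mul_re, Complex.ofReal_re, Complex.ofReal_im, Complex.log_re]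
      ring
    have h2 := ContinuousLinearMap.integral_comp_comm Complex.reCLM hF_int
    simp only [Complex.reCLM_apply] at h2
    rw [h1, h2, hkey]
    have : (1 : ℂ) - (c : ℂ) ^ 2 = ((1 - c ^ 2 : ℝ) : ℂ) := by push_cast; ring
    rw [this]
    rw [← Complex.ofReal_log hnum.le]
    simp
  rw [split, hre, ← circleMeasure, integral_qcn n hc0 hc1]
  ring

lemma hasSum_final (n : ℕ) (hc0 : 0 ≤ c) (hc1 : c < 1) :
    HasSum (fun k : ℕ => (1 / ((k : ℝ) + 1)) *
        ‖fourierCoeff (fun θ => (qcn n c θ : ℂ)) ((k : ℤ) + 1)‖ ^ 2)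
      ((1 / ((n : ℝ) + 1)) * (-Real.log (1 - c ^ 2))) := by
  set N : ℤ := (n : ℤ) + 1 with hNdef
  have hN : 0 < N := by positivity
  set f : ℕ → ℝ := fun k => (1 / ((k : ℝ) + 1)) *
      ‖fourierCoeff (fun θ => (qcn n c θ : ℂ)) ((k : ℤ) + 1)‖ ^ 2 with hfdef
  set i : ℕ → ℕ := fun m => (n + 1) * m + n with hidef
  have hi : Function.Injective i := by
    intro a b hab
    simp only [hidef] at hab
    have h2 : (n + 1) * a = (n + 1) * b := by omega
    exact Nat.eq_of_mul_eq_mul_left (Nat.succ_pos n) h2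
  have hzero : ∀ k, k ∉ Set.range i → f k = 0 := by
    intro k hk
    have hnd : ¬ (N ∣ (k : ℤ) + 1) := by
      rintro ⟨d, hd⟩
      have hd1 : 1 ≤ d := by
        by_contra hcon
        push_neg at hcon
        have : d ≤ 0 := by omega
        nlinarith [hd, hN]
      obtain ⟨m, rfl⟩ : ∃ m : ℕ, d = (m : ℤ) + 1 := ⟨(d - 1).toNat, by omega⟩
      apply hk
      refine ⟨m, ?_⟩
      have hk' : (k : ℤ) = ((n + 1) * m + n : ℕ) := by
        push_cast
        linear_combination hd
      exact_mod_cast hk'.symm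
    simp only [hfdef]
    rw [fourierCoeff_qcn n hc0 hc1, if_neg hnd]
    simp
  have hcomp : ∀ m : ℕ, f (i m) = (1 / ((n : ℝ) + 1)) * ((c ^ 2) ^ (m + 1) / ((m : ℝ) + 1)) := by
    intro m
    have him : ((i m : ℤ)) + 1 = N * ((m : ℤ) + 1) := by
      simp only [hidef, hNdef]
      push_cast
      ring
    have hdvd : N ∣ (i m : ℤ) + 1 := ⟨(m : ℤ) + 1, him⟩
    have hquot : ((i m : ℤ) + 1) / N = (m : ℤ) + 1 := by
      rw [him, Int.mul_ediv_cancel_left _ hN.ne']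
    simp only [hfdef]
    rw [fourierCoeff_qcn n hc0 hc1, if_pos hdvd, hquot]
    have hnat : ((m : ℤ) + 1).natAbs = m + 1 := by omega
    rw [hnat]
    have hnorm : ‖(c : ℂ) ^ (m + 1)‖ = c ^ (m + 1) := by
      rw [norm_pow, Complex.norm_real, Real.norm_eq_abs, _root_.abs_of_nonneg hc0]
    rw [hnorm]
    have him' : ((i m : ℝ)) + 1 = ((n : ℝ) + 1) * ((m : ℝ) + 1) := by
      simp only [hidef]
      push_cast
      ring
    rw [him']
    have hn0 : ((n : ℝ) + 1) ≠ 0 := by positivity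
    have hm0 : ((m : ℝ) + 1) ≠ 0 := by positivity
    field_simp
    ring
  have habs : |c ^ 2| < 1 := by
    rw [_root_.abs_of_nonneg (by positivity : (0:ℝ) ≤ c ^ 2)]
    nlinarith
  have hg := (Real.hasSum_pow_div_log_of_abs_lt_one habs).mul_left (1 / ((n : ℝ) + 1))
  have hg' : HasSum (fun m : ℕ => f (i m)) ((1 / ((n : ℝ) + 1)) * (-Real.log (1 - c ^ 2))) := by
    rw [show (fun m : ℕ => f (i m)) = _ from funext hcomp]
    exact hg
  exact (Function.Injective.hasSum_iff hi hzero).mp hg'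

end QcnAux

/-- `q_{c,n}` is a probability density, its entropy equals `−log(1−c²)`, and
`(n+1) Σ_{k≥1} (1/k)|q̂_{c,n}(k)|² = −log(1−c²)`; in particular, equality holds for
`q_{c,n}` in the entropy–`Ḣ^{-1/2}` inequality. -/
theorem qcn_extremizer (n : ℕ) (c : ℝ) (hc0 : 0 ≤ c) (hc1 : c < 1) :
    (∀ θ, 0 ≤ qcn n c θ) ∧
    (∫ θ, qcn n c θ ∂circleMeasure = 1) ∧
    (∫ θ, qcn n c θ * Real.log (qcn n c θ) ∂circleMeasure = -Real.log (1 - c ^ 2)) ∧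
    Summable (fun k : ℕ =>
      (1 / ((k : ℝ) + 1)) * ‖fourierCoeff (fun θ => (qcn n c θ : ℂ)) ((k : ℤ) + 1)‖ ^ 2) ∧
    ((n : ℝ) + 1) *
      ∑' k : ℕ, (1 / ((k : ℝ) + 1)) *
        ‖fourierCoeff (fun θ => (qcn n c θ : ℂ)) ((k : ℤ) + 1)‖ ^ 2
      = -Real.log (1 - c ^ 2) := by
  have hs := QcnAux.hasSum_final n (c := c) hc0 hc1
  refine ⟨fun θ => (QcnAux.qcn_pos n hc0 hc1 θ).le, QcnAux.integral_qcn n hc0 hc1,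
    QcnAux.entropy_qcn n hc0 hc1, hs.summable, ?_⟩
  rw [hs.tsum_eq, ← mul_assoc, mul_one_div, div_self (by positivity : ((n : ℝ) + 1) ≠ 0), one_mul]
end
end

section
/- Let n ≥ 0 be an integer and let W : 𝕋 → ℝ be a continuous even function with Ŵ(0) = 0 which is 1/(n+1)-periodic (W(θ + 1/(n+1)) = W(θ) for all θ), normalized so that 2Ŵ(n+1) = 1, and satisfying the decay condition 2Ŵ(k) ≤ (n+1)/k for every integer k ≥ 1. Then for every K > 1 there exists a continuous probability density q on 𝕋 with F_K(q) < 0 = F_K(q_u); in particular, the uniform density is not a global minimizer of the free energy in the supercritical regime K > 1. -/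
open MeasureTheory Real Complex
open scoped Real

noncomputable section

/-- The mean-field free energy
`F_K(q) = ∫ q log q − K ∫∫ W(θ−θ') q(θ) q(θ')`. -/
def freeEnergy (W : UnitAddCircle → ℝ) (K : ℝ) (q : UnitAddCircle → ℝ) : ℝ :=
  (∫ θ, q θ * Real.log (q θ) ∂circleMeasure) -
    K * ∫ θ, (∫ θ', W (θ - θ') * q θ * q θ' ∂circleMeasure) ∂circleMeasure

namespace SupercritAux

instance : IsProbabilityMeasure circleMeasure := by
  unfold circleMeasure; infer_instance

instance : circleMeasure.IsAddLeftInvariant := by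
  unfold circleMeasure; infer_instance

instance : circleMeasure.IsNegInvariant := by
  unfold circleMeasure; infer_instance

instance : IsFiniteMeasure circleMeasure := by
  unfold circleMeasure; infer_instance

lemma cont_integrable {E : Type*} [NormedAddCommGroup E] {f : UnitAddCircle → E}
    (hf : Continuous f) : Integrable f circleMeasure := by
  apply hf.integrable_of_hasCompactSupport
  exact IsCompact.of_isClosed_subset isCompact_univ (isClosed_tsupport f) (Set.subset_univ _)

lemma fourier_apply_add (t : ℤ) (x y : UnitAddCircle) :
    fourier t (x + y) = fourier t x * fourier t y := by
  simp only [fourier_apply, smul_add, AddCircle.toCircle_add, Circle.coe_mul]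

lemma fourier_apply_neg (t : ℤ) (x : UnitAddCircle) :
    fourier t (-x) = fourier (-t) x := by
  rw [fourier_apply, smul_neg, fourier_neg', ← fourier_neg]

lemma abs_fourier (t : ℤ) (x : UnitAddCircle) : ‖fourier t x‖ = 1 := by
  rw [fourier_apply]; exact Circle.norm_coe _

/-- Integral of a nonzero Fourier mode vanishes. -/
lemma integral_fourier {t : ℤ} (ht : t ≠ 0) :
    ∫ θ, fourier t θ ∂circleMeasure = 0 := by
  apply integral_eq_zero_of_add_right_eq_neg (g := ((1/2/(t:ℝ) : ℝ) : UnitAddCircle))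
  intro x
  simpa using fourier_add_half_inv_index ht one_pos x


lemma hderEnt (y : ℝ) (hy : -1 < y) :
    HasDerivAt (fun y : ℝ => (1+y) * Real.log (1+y)) (Real.log (1+y) + 1) y := by
  have h1y : (0:ℝ) < 1 + y := by linarith
  have ha : HasDerivAt (fun y : ℝ => 1 + y) 1 y := (hasDerivAt_id y).const_add 1
  have hb : HasDerivAt (fun y : ℝ => Real.log (1+y)) (1/(1+y)) y := by
    simpa [one_div, Function.comp_def] using (Real.hasDerivAt_log h1y.ne').comp y ha
  have := ha.mul hb
  refine this.congr_deriv ?_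
  rw [one_mul, mul_one_div_cancel h1y.ne']

lemma ent_bound {x : ℝ} (h1 : -(1/2) ≤ x) (h2 : x ≤ 1/2) :
    (1+x) * Real.log (1+x) ≤ x + x^2/2 + |x|^3 := by
  rcases le_or_gt 0 x with hx | hx
  · -- x ≥ 0 : F y = y + y²/2 - (1+y) log(1+y) is monotone on [0,∞)
    have habs : |x|^3 = x^3 := by rw [_root_.abs_of_nonneg hx]
    set F : ℝ → ℝ := fun y => y + y^2/2 - (1+y) * Real.log (1+y) with hF
    have hderF : ∀ y : ℝ, -1 < y → HasDerivAt F (y - Real.log (1+y)) y := by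
      intro y hy
      have hA : HasDerivAt (fun y : ℝ => y + y^2/2) (1 + y) y := by
        have := (hasDerivAt_id y).add ((hasDerivAt_pow 2 y).div_const 2)
        refine this.congr_deriv ?_
        simp
      have := hA.sub (hderEnt y hy)
      refine this.congr_deriv ?_
      ring
    have hmono : MonotoneOn F (Set.Ici (0:ℝ)) := by
      apply monotoneOn_of_deriv_nonneg (convex_Ici 0)
      · intro y hy
        exact ((hderF y (by simp at hy; linarith)).continuousAt).continuousWithinAt
      · intro y hy
        simp only [interior_Ici, Set.mem_Ioi] at hy
        exact ((hderF y (by linarith)).differentiableAt).differentiableWithinAt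
      · intro y hy
        simp only [interior_Ici, Set.mem_Ioi] at hy
        rw [(hderF y (by linarith)).deriv]
        have := Real.log_le_sub_one_of_pos (show (0:ℝ) < 1 + y by linarith)
        linarith
    have h0 : F 0 = 0 := by simp [hF]
    have := hmono (Set.self_mem_Ici) (Set.mem_Ici.2 hx) hx
    rw [h0] at this
    have hx3 : 0 ≤ x^3 := by positivity
    simp only [hF] at this
    rw [habs]; linarith
  · -- x < 0 : G y = y + y²/2 - y³ - (1+y) log(1+y) is antitone on [-1/2, 0]
    have habs : |x|^3 = -(x^3) := by rw [_root_.abs_of_nonpos hx.le]; ring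
    set G : ℝ → ℝ := fun y => y + y^2/2 - y^3 - (1+y) * Real.log (1+y) with hG
    have hderG : ∀ y : ℝ, -1 < y → HasDerivAt G (y - 3*y^2 - Real.log (1+y)) y := by
      intro y hy
      have hA : HasDerivAt (fun y : ℝ => y + y^2/2 - y^3) (1 + y - 3*y^2) y := by
        have := ((hasDerivAt_id y).add ((hasDerivAt_pow 2 y).div_const 2)).sub
          (hasDerivAt_pow 3 y)
        refine this.congr_deriv ?_
        simp
        try ring
      have := hA.sub (hderEnt y hy)
      refine this.congr_deriv ?_
      ring
    have hanti : AntitoneOn G (Set.Icc (-(1/2):ℝ) 0) := by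
      apply antitoneOn_of_deriv_nonpos (convex_Icc _ _)
      · intro y hy
        simp only [Set.mem_Icc] at hy
        exact ((hderG y (by linarith [hy.1])).continuousAt).continuousWithinAt
      · intro y hy
        rw [interior_Icc] at hy
        exact ((hderG y (by linarith [hy.1])).differentiableAt).differentiableWithinAt
      · intro y hy
        rw [interior_Icc] at hy
        obtain ⟨hy1, hy2⟩ := hy
        rw [(hderG y (by linarith)).deriv]
        have h1y : (0:ℝ) < 1 + y := by linarith
        have hlog : 1 - 1/(1+y) ≤ Real.log (1+y) := by
          have := Real.log_le_sub_one_of_pos (show (0:ℝ) < (1+y)⁻¹ by positivity)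
          rw [Real.log_inv] at this
          rw [one_div]
          linarith
        have key : y - 3*y^2 - (1 - 1/(1+y)) ≤ 0 := by
          have heq : y - 3*y^2 - (1 - 1/(1+y)) = -(y^2*(2+3*y))/(1+y) := by
            field_simp
            ring
          rw [heq]
          apply div_nonpos_of_nonpos_of_nonneg _ h1y.le
          have : (0:ℝ) ≤ y^2*(2+3*y) := by nlinarith [sq_nonneg y]
          linarith
        linarith
    have h0 : G 0 = 0 := by simp [hG]
    have := hanti (Set.mem_Icc.2 ⟨h1, hx.le⟩) (Set.mem_Icc.2 ⟨by norm_num, le_refl 0⟩) hx.le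
    rw [h0] at this
    simp only [hG] at this
    rw [habs]; linarith

end SupercritAux

/-- **Supercritical regime.** For a `1/(n+1)`-periodic even interaction with `Ŵ(0)=0`,
normalized by `2Ŵ(n+1)=1`, satisfying the decay condition `2Ŵ(k) ≤ (n+1)/k`, and every
`K > 1`, there is a continuous probability density `q` with `F_K(q) < 0 = F_K(q_u)`:
the uniform density is not a global minimizer. -/
theorem uniform_not_minimizer_supercritical
    (n : ℕ) (W : UnitAddCircle → ℝ) (hWcont : Continuous W)
    (hWeven : ∀ θ, W (-θ) = W θ)
    (hW0 : ∫ θ, W θ ∂circleMeasure = 0)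
    (hWper : ∀ θ, W (θ + ((1 / ((n : ℝ) + 1) : ℝ) : UnitAddCircle)) = W θ)
    (hWnorm : 2 * (fourierCoeff (fun θ => (W θ : ℂ)) ((n : ℤ) + 1)).re = 1)
    (hWdecay : ∀ k : ℕ, 1 ≤ k →
      2 * (fourierCoeff (fun θ => (W θ : ℂ)) (k : ℤ)).re ≤ ((n : ℝ) + 1) / k)
    (K : ℝ) (hK : 1 < K) :
    ∃ q : UnitAddCircle → ℝ, Continuous q ∧ (∀ θ, 0 ≤ q θ) ∧
      (∫ θ, q θ ∂circleMeasure = 1) ∧ freeEnergy W K q < 0 := by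
  classical
  open SupercritAux in
  set m : ℤ := (n : ℤ) + 1 with hm_def
  have hm : m ≠ 0 := by omega
  set c : UnitAddCircle → ℝ := fun θ => (fourier m θ).re with hc_def
  have hc_cont : Continuous c := Complex.continuous_re.comp (fourier m).continuous
  have hc1 : ∀ θ, |c θ| ≤ 1 := by
    intro θ
    calc |c θ| ≤ ‖fourier m θ‖ := Complex.abs_re_le_norm _
    _ = 1 := SupercritAux.abs_fourier m θ
  have hcC : ∀ θ, ((c θ : ℝ) : ℂ) = (fourier m θ + fourier (-m) θ) / 2 := by
    intro θ
    rw [fourier_neg, Complex.add_conj]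
    push_cast
    ring
  have int_f : ∀ t : ℤ, Integrable (fun θ => fourier t θ) circleMeasure :=
    fun t => SupercritAux.cont_integrable (fourier t).continuous
  have hoR : ∀ f : UnitAddCircle → ℝ,
      (∫ θ, ((f θ : ℝ) : ℂ) ∂circleMeasure) = ((∫ θ, f θ ∂circleMeasure : ℝ) : ℂ) :=
    fun f => integral_ofReal
  -- ∫ c = 0
  have hIc : ∫ θ, c θ ∂circleMeasure = 0 := by
    have : ((∫ θ, c θ ∂circleMeasure : ℝ) : ℂ) = 0 := by
      rw [← hoR]
      rw [show (fun θ => ((c θ : ℝ) : ℂ)) = fun θ => (fourier m θ + fourier (-m) θ) / 2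
        from funext hcC]
      rw [integral_div, integral_add (int_f m) (int_f (-m)),
        SupercritAux.integral_fourier hm, SupercritAux.integral_fourier (neg_ne_zero.2 hm)]
      simp
    exact_mod_cast this
  -- ∫ c² = 1/2
  have hIc2 : ∫ θ, (c θ)^2 ∂circleMeasure = 1/2 := by
    have key : ∀ θ, (((c θ)^2 : ℝ) : ℂ)
        = (fourier (2*m) θ + fourier (-(2*m)) θ + 2) / 4 := by
      intro θ
      have h1 : fourier m θ * fourier m θ = fourier (2*m) θ := by
        rw [show (2*m : ℤ) = m + m by ring]
        exact fourier_add.symm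
      have h2 : (starRingEnd ℂ) (fourier m θ) * (starRingEnd ℂ) (fourier m θ)
          = fourier (-(2*m)) θ := by
        rw [fourier_neg, ← h1, map_mul]
      have h3 : fourier m θ * (starRingEnd ℂ) (fourier m θ) = 1 := by
        rw [Complex.mul_conj]
        norm_cast
        rw [Complex.normSq_eq_norm_sq, SupercritAux.abs_fourier]
        norm_num
      have h4 : ((c θ : ℝ) : ℂ) = (fourier m θ + (starRingEnd ℂ) (fourier m θ)) / 2 := by
        rw [hcC θ, fourier_neg]
      calc (((c θ)^2 : ℝ) : ℂ) = ((c θ : ℝ) : ℂ)^2 := by push_cast; ring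
      _ = (fourier m θ * fourier m θ
            + 2 * (fourier m θ * (starRingEnd ℂ) (fourier m θ))
            + (starRingEnd ℂ) (fourier m θ) * (starRingEnd ℂ) (fourier m θ)) / 4 := by
        rw [h4]; ring
      _ = (fourier (2*m) θ + fourier (-(2*m)) θ + 2) / 4 := by
        rw [h1, h2, h3]; ring
    have h2m : (2*m : ℤ) ≠ 0 := by omega
    have : ((∫ θ, (c θ)^2 ∂circleMeasure : ℝ) : ℂ) = ((1/2 : ℝ) : ℂ) := by
      rw [← hoR]
      rw [show (fun θ => (((c θ)^2 : ℝ) : ℂ))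
        = fun θ => (fourier (2*m) θ + fourier (-(2*m)) θ + 2) / 4 from funext key]
      have iadd : Integrable (fun θ : UnitAddCircle => fourier (2*m) θ + fourier (-(2*m)) θ)
          circleMeasure := (int_f (2*m)).add (int_f (-(2*m)))
      rw [integral_div, integral_add iadd (integrable_const 2),
        integral_add (int_f (2*m)) (int_f (-(2*m))),
        SupercritAux.integral_fourier h2m, SupercritAux.integral_fourier (neg_ne_zero.2 h2m)]
      simp
      norm_num
    exact_mod_cast this
  -- ∫ |c|³ ≤ 1
  have hIc3 : ∫ θ, |c θ|^3 ∂circleMeasure ≤ 1 := by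
    have h := integral_mono (μ := circleMeasure)
      (SupercritAux.cont_integrable ((hc_cont.abs).pow 3)) (integrable_const 1)
      (fun θ => pow_le_one₀ (abs_nonneg _) (hc1 θ))
    simpa using h
  -- the convolution identity
  have contWsub : ∀ θ : UnitAddCircle, Continuous (fun θ' => ((W (θ - θ') : ℝ) : ℂ)) := by
    intro θ
    exact Complex.continuous_ofReal.comp (hWcont.comp (continuous_const.sub continuous_id))
  have L1 : ∀ (t : ℤ) (θ : UnitAddCircle),
      (∫ θ', ((W (θ - θ') : ℝ) : ℂ) * fourier t θ' ∂circleMeasure)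
        = fourier t θ * ∫ u, ((W u : ℝ) : ℂ) * fourier t u ∂circleMeasure := by
    intro t θ
    have hshift := MeasureTheory.integral_add_left_eq_self (μ := circleMeasure)
      (fun θ' => ((W (θ - θ') : ℝ) : ℂ) * fourier t θ') θ
    rw [← hshift]
    have hpt : ∀ u : UnitAddCircle, ((W (θ - (θ + u)) : ℝ) : ℂ) * fourier t (θ + u)
        = fourier t θ * (((W u : ℝ) : ℂ) * fourier t u) := by
      intro u
      have h1 : θ - (θ + u) = -u := by abel
      rw [h1, hWeven, SupercritAux.fourier_apply_add]
      ring
    rw [show (fun u => ((W (θ - (θ + u)) : ℝ) : ℂ) * fourier t (θ + u))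
      = fun u => fourier t θ * (((W u : ℝ) : ℂ) * fourier t u) from funext hpt]
    rw [integral_const_mul]
  -- Fourier coefficients of W
  set A : ℤ → ℂ := fun t => ∫ u, ((W u : ℝ) : ℂ) * fourier t u ∂circleMeasure with hA_def
  have intWf : ∀ t : ℤ, Integrable (fun u => ((W u : ℝ) : ℂ) * fourier t u) circleMeasure :=
    fun t => SupercritAux.cont_integrable
      ((Complex.continuous_ofReal.comp hWcont).mul (fourier t).continuous)
  have hA0 : A 0 = 0 := by
    have : (fun u => ((W u : ℝ) : ℂ) * fourier 0 u) = fun u => ((W u : ℝ) : ℂ) := by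
      funext u; rw [fourier_zero, mul_one]
    rw [hA_def]
    simp only [this]
    rw [hoR, hW0]
    norm_num
  have hAsym : A m = A (-m) := by
    have hneg := MeasureTheory.integral_neg_eq_self
      (fun u => ((W u : ℝ) : ℂ) * fourier m u) circleMeasure
    have hpt : ∀ u : UnitAddCircle, ((W (-u) : ℝ) : ℂ) * fourier m (-u)
        = ((W u : ℝ) : ℂ) * fourier (-m) u := by
      intro u
      rw [hWeven, SupercritAux.fourier_apply_neg]
    calc A m = ∫ u, ((W (-u) : ℝ) : ℂ) * fourier m (-u) ∂circleMeasure := hneg.symm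
    _ = ∫ u, ((W u : ℝ) : ℂ) * fourier (-m) u ∂circleMeasure := by
        rw [show (fun u => ((W (-u) : ℝ) : ℂ) * fourier m (-u))
          = fun u => ((W u : ℝ) : ℂ) * fourier (-m) u from funext hpt]
    _ = A (-m) := rfl
  have hAconj : (starRingEnd ℂ) (A m) = A (-m) := by
    rw [hA_def]
    simp only
    rw [← integral_conj]
    congr 1
    funext u
    rw [map_mul, Complex.conj_ofReal, ← fourier_neg]
  have hAreal : (A m).im = 0 := by
    have : (starRingEnd ℂ) (A m) = A m := by rw [hAconj, ← hAsym]
    rw [Complex.conj_eq_iff_im] at this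
    exact this
  have hcf : fourierCoeff (fun θ => ((W θ : ℝ) : ℂ)) m = A (-m) := by
    rw [fourierCoeff]
    show (∫ u, fourier (-m) u • ((W u : ℝ) : ℂ) ∂circleMeasure) = A (-m)
    rw [hA_def]
    congr 1
    funext u
    rw [smul_eq_mul, mul_comm]
  have hAm : A m = (1/2 : ℂ) := by
    have hre : (A m).re = 1/2 := by
      have h : fourierCoeff (fun θ => ((W θ : ℝ) : ℂ)) m = A m := by rw [hcf, ← hAsym]
      rw [h] at hWnorm
      linarith
    apply Complex.ext
    · simpa using hre
    · simpa using hAreal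
  have hAnegm : A (-m) = (1/2 : ℂ) := by rw [← hAsym, hAm]
  -- choose ε and q
  set ε : ℝ := min ((K-1)/8) (1/2) with hε_def
  have hε0 : 0 < ε := lt_min (by linarith) (by norm_num)
  have hεhalf : ε ≤ 1/2 := min_le_right _ _
  have hεK : ε ≤ (K-1)/8 := min_le_left _ _
  set q : UnitAddCircle → ℝ := fun θ => 1 + ε * c θ with hq_def
  have hq_cont : Continuous q := continuous_const.add (continuous_const.mul hc_cont)
  have hxhalf : ∀ θ, |ε * c θ| ≤ 1/2 := by
    intro θ
    rw [abs_mul, _root_.abs_of_nonneg hε0.le]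
    calc ε * |c θ| ≤ ε * 1 := by
          exact mul_le_mul_of_nonneg_left (hc1 θ) hε0.le
    _ = ε := mul_one ε
    _ ≤ 1/2 := hεhalf
  have hq_pos : ∀ θ, 0 < q θ := by
    intro θ
    have := abs_le.1 (hxhalf θ)
    simp only [hq_def]
    linarith [this.1]
  have hq_nonneg : ∀ θ, 0 ≤ q θ := fun θ => (hq_pos θ).le
  have hq_int : ∫ θ, q θ ∂circleMeasure = 1 := by
    rw [hq_def]
    simp only
    rw [integral_add (integrable_const 1)
      ((SupercritAux.cont_integrable hc_cont).const_mul ε),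
      integral_const_mul, hIc]
    simp
  -- the inner interaction integral
  have hinner : ∀ θ, (∫ θ', W (θ - θ') * q θ * q θ' ∂circleMeasure) = q θ * (ε/2 * c θ) := by
    intro θ
    have step1 : (∫ θ', W (θ - θ') * q θ * q θ' ∂circleMeasure)
        = q θ * ∫ θ', W (θ - θ') * q θ' ∂circleMeasure := by
      rw [← integral_const_mul]
      congr 1
      funext θ'
      ring
    rw [step1]
    congr 1
    have expand : ∀ θ' : UnitAddCircle, ((W (θ - θ') * q θ' : ℝ) : ℂ)
        = ((W (θ - θ') : ℝ) : ℂ) * fourier 0 θ'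
          + (ε/2 : ℂ) * (((W (θ - θ') : ℝ) : ℂ) * fourier m θ')
          + (ε/2 : ℂ) * (((W (θ - θ') : ℝ) : ℂ) * fourier (-m) θ') := by
      intro θ'
      have hqc : ((q θ' : ℝ) : ℂ) = 1 + (ε : ℂ) * ((c θ' : ℝ) : ℂ) := by
        rw [hq_def]; push_cast; ring
      calc ((W (θ - θ') * q θ' : ℝ) : ℂ)
          = ((W (θ - θ') : ℝ) : ℂ) * ((q θ' : ℝ) : ℂ) := by push_cast; ring
      _ = ((W (θ - θ') : ℝ) : ℂ) * (1 + (ε : ℂ) * ((fourier m θ' + fourier (-m) θ') / 2)) := by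
          rw [hqc, hcC θ']
      _ = _ := by rw [fourier_zero]; ring
    have hcomplex : (∫ θ', ((W (θ - θ') * q θ' : ℝ) : ℂ) ∂circleMeasure)
        = ((ε/2 * c θ : ℝ) : ℂ) := by
      rw [show (fun θ' => ((W (θ - θ') * q θ' : ℝ) : ℂ))
        = fun θ' => ((W (θ - θ') : ℝ) : ℂ) * fourier 0 θ'
          + (ε/2 : ℂ) * (((W (θ - θ') : ℝ) : ℂ) * fourier m θ')
          + (ε/2 : ℂ) * (((W (θ - θ') : ℝ) : ℂ) * fourier (-m) θ') from funext expand]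
      have i1 : Integrable (fun θ' => ((W (θ - θ') : ℝ) : ℂ) * fourier 0 θ') circleMeasure :=
        SupercritAux.cont_integrable ((contWsub θ).mul (fourier 0).continuous)
      have i2 : Integrable (fun θ' => (ε/2 : ℂ)
          * (((W (θ - θ') : ℝ) : ℂ) * fourier m θ')) circleMeasure :=
        (SupercritAux.cont_integrable ((contWsub θ).mul (fourier m).continuous)).const_mul _
      have i3 : Integrable (fun θ' => (ε/2 : ℂ)
          * (((W (θ - θ') : ℝ) : ℂ) * fourier (-m) θ')) circleMeasure :=
        (SupercritAux.cont_integrable ((contWsub θ).mul (fourier (-m)).continuous)).const_mul _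
      have i12 : Integrable (fun θ' => ((W (θ - θ') : ℝ) : ℂ) * fourier 0 θ'
          + (ε/2 : ℂ) * (((W (θ - θ') : ℝ) : ℂ) * fourier m θ')) circleMeasure := i1.add i2
      rw [integral_add i12 i3, integral_add i1 i2,
        integral_const_mul, integral_const_mul,
        L1 0 θ, L1 m θ, L1 (-m) θ]
      show fourier 0 θ * A 0 + (ε/2 : ℂ) * (fourier m θ * A m)
          + (ε/2 : ℂ) * (fourier (-m) θ * A (-m)) = _
      rw [hA0, hAm, hAnegm]
      have : ((ε/2 * c θ : ℝ) : ℂ) = (ε/2 : ℂ) * ((c θ : ℝ) : ℂ) := by push_cast; ring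
      rw [this, hcC θ]
      ring
    rw [hoR (fun θ' => W (θ - θ') * q θ')] at hcomplex
    exact_mod_cast hcomplex
  -- the outer interaction integral
  have houter : (∫ θ, (∫ θ', W (θ - θ') * q θ * q θ' ∂circleMeasure) ∂circleMeasure)
      = ε^2/4 := by
    rw [show (fun θ => (∫ θ', W (θ - θ') * q θ * q θ' ∂circleMeasure))
      = fun θ => (ε/2) * c θ + (ε^2/2) * (c θ)^2 from funext fun θ => by
        rw [hinner θ, hq_def]; ring]
    have j1 : Integrable (fun θ => (ε/2) * c θ) circleMeasure :=
      (SupercritAux.cont_integrable hc_cont).const_mul _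
    have j2 : Integrable (fun θ => (ε^2/2) * (c θ)^2) circleMeasure :=
      (SupercritAux.cont_integrable (hc_cont.pow 2)).const_mul _
    rw [integral_add j1 j2, integral_const_mul, integral_const_mul, hIc, hIc2]
    ring
  -- entropy bound
  have hent : (∫ θ, q θ * Real.log (q θ) ∂circleMeasure) ≤ ε^2/4 + ε^3 := by
    have hb : ∀ θ, q θ * Real.log (q θ)
        ≤ ε * c θ + (ε^2/2) * (c θ)^2 + ε^3 * |c θ|^3 := by
      intro θ
      have hx := abs_le.1 (hxhalf θ)
      have := SupercritAux.ent_bound hx.1 hx.2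
      have habs : |ε * c θ|^3 = ε^3 * |c θ|^3 := by
        rw [abs_mul, _root_.abs_of_nonneg hε0.le]; ring
      calc q θ * Real.log (q θ) = (1 + ε * c θ) * Real.log (1 + ε * c θ) := by rw [hq_def]
      _ ≤ ε * c θ + (ε * c θ)^2/2 + |ε * c θ|^3 := this
      _ = ε * c θ + (ε^2/2) * (c θ)^2 + ε^3 * |c θ|^3 := by rw [habs]; ring
    have hint1 : Integrable (fun θ => q θ * Real.log (q θ)) circleMeasure :=
      SupercritAux.cont_integrable (hq_cont.mul (hq_cont.log fun θ => (hq_pos θ).ne'))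
    have hint2 : Integrable (fun θ => ε * c θ + (ε^2/2) * (c θ)^2 + ε^3 * |c θ|^3)
        circleMeasure :=
      SupercritAux.cont_integrable (((continuous_const.mul hc_cont).add
        (continuous_const.mul (hc_cont.pow 2))).add
        (continuous_const.mul ((hc_cont.abs).pow 3)))
    have hmono := integral_mono hint1 hint2 hb
    have hrhs : (∫ θ, (ε * c θ + (ε^2/2) * (c θ)^2 + ε^3 * |c θ|^3) ∂circleMeasure)
        ≤ ε^2/4 + ε^3 := by
      have k1 : Integrable (fun θ => ε * c θ) circleMeasure :=
        (SupercritAux.cont_integrable hc_cont).const_mul _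
      have k2 : Integrable (fun θ => (ε^2/2) * (c θ)^2) circleMeasure :=
        (SupercritAux.cont_integrable (hc_cont.pow 2)).const_mul _
      have k3 : Integrable (fun θ => ε^3 * |c θ|^3) circleMeasure :=
        (SupercritAux.cont_integrable ((hc_cont.abs).pow 3)).const_mul _
      have k12 : Integrable (fun θ => ε * c θ + (ε^2/2) * (c θ)^2) circleMeasure := k1.add k2
      rw [integral_add k12 k3, integral_add k1 k2,
        integral_const_mul, integral_const_mul,
        integral_const_mul, hIc, hIc2]
      have h3 : ε^3 * (∫ θ, |c θ|^3 ∂circleMeasure) ≤ ε^3 * 1 :=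
        mul_le_mul_of_nonneg_left hIc3 (by positivity)
      nlinarith [h3]
    linarith
  refine ⟨q, hq_cont, hq_nonneg, hq_int, ?_⟩
  rw [freeEnergy, houter]
  have hcube : ε^3 ≤ (K-1)/8 * ε^2 := by nlinarith [sq_nonneg ε]
  nlinarith [sq_nonneg ε, mul_pos hε0 hε0]
end
end

section
/- For the Doi–Onsager interaction W_DO(θ) = −|sin(2πθ)| on 𝕋 and every K > 3π/4, there exists a continuous probability density q on 𝕋 such that ∫_𝕋 q log q dθ + K ∫_𝕋 ∫_𝕋 |sin(2π(θ−θ'))| q(θ) q(θ') dθ dθ' < 2K/π; that is, in the supercritical regime K > 3π/4 the uniform density is not a global minimizer of the Doi–Onsager free energy. -/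
open MeasureTheory Real Complex intervalIntegral
open scoped Real

noncomputable section

/-- `|sin(2πθ)|` realized on the circle as `|Im e^{2πiθ}|`. -/
def absSin (θ : UnitAddCircle) : ℝ := |(fourier 1 θ).im|

lemma circle_integral (f : UnitAddCircle → ℝ) :
    ∫ θ, f θ ∂circleMeasure = ∫ x in (0:ℝ)..1, f ↑x := by
  have h : circleMeasure = (volume : Measure UnitAddCircle) := by
    rw [AddCircle.volume_eq_smul_haarAddCircle]
    simp [circleMeasure]
  rw [h, ← UnitAddCircle.intervalIntegral_preimage 0 f]
  norm_num

lemma absSin_coe (x : ℝ) : absSin (x : UnitAddCircle) = |Real.sin (2*π*x)| := by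
  rw [absSin, fourier_coe_apply]
  rw [show (2*π*Complex.I*(1:ℤ)*x/(1:ℝ) : ℂ) = ((2*π*x : ℝ) : ℂ) * Complex.I by push_cast; ring]
  rw [Complex.exp_ofReal_mul_I_im]

lemma cos2_coe (x : ℝ) : (fourier 2 (x : UnitAddCircle)).re = Real.cos (4*π*x) := by
  rw [fourier_coe_apply]
  rw [show (2*π*Complex.I*(2:ℤ)*x/(1:ℝ) : ℂ) = ((4*π*x : ℝ) : ℂ) * Complex.I by push_cast; ring]
  rw [Complex.exp_ofReal_mul_I_re]

lemma hasDerivAt_cos_mul (a x : ℝ) :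
    HasDerivAt (fun x => Real.cos (a*x)) (-(a * Real.sin (a*x))) x := by
  exact ((Real.hasDerivAt_cos (a*x)).comp x ((hasDerivAt_id x).const_mul a)).congr_deriv (by ring)

lemma hasDerivAt_sin_mul (a x : ℝ) :
    HasDerivAt (fun x => Real.sin (a*x)) (a * Real.cos (a*x)) x := by
  exact ((Real.hasDerivAt_sin (a*x)).comp x ((hasDerivAt_id x).const_mul a)).congr_deriv (by ring)

lemma ftc_s (s t : ℝ) : ∫ x in s..t, Real.sin (2*π*x)
    = (-(Real.cos (2*π*t)/(2*π))) - (-(Real.cos (2*π*s)/(2*π))) := by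
  apply intervalIntegral.integral_eq_sub_of_hasDerivAt
  · intro x _
    have h := ((hasDerivAt_cos_mul (2*π) x).div_const (2*π)).neg
    convert h using 1
    · rfl
    field_simp
  · exact (by fun_prop : Continuous fun x => Real.sin (2*π*x)).intervalIntegrable _ _

lemma ftc_c (s t : ℝ) : ∫ x in s..t, Real.cos (4*π*x)
    = Real.sin (4*π*t)/(4*π) - Real.sin (4*π*s)/(4*π) := by
  apply intervalIntegral.integral_eq_sub_of_hasDerivAt
  · intro x _
    have h := (hasDerivAt_sin_mul (4*π) x).div_const (4*π)
    convert h using 1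
    · rfl
    field_simp
  · exact (by fun_prop : Continuous fun x => Real.cos (4*π*x)).intervalIntegrable _ _

lemma ftc_c2 (s t : ℝ) : ∫ x in s..t, Real.cos (4*π*x)^2
    = (t/2 + Real.sin (8*π*t)/(16*π)) - (s/2 + Real.sin (8*π*s)/(16*π)) := by
  apply intervalIntegral.integral_eq_sub_of_hasDerivAt
  · intro x _
    have h := ((hasDerivAt_id x).div_const 2).add ((hasDerivAt_sin_mul (8*π) x).div_const (16*π))
    convert h using 1
    · rfl
    have e : Real.cos (8*π*x) = 2 * Real.cos (4*π*x)^2 - 1 := by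
      rw [show 8*π*x = 2*(4*π*x) by ring, Real.cos_two_mul]
    field_simp
    ring_nf at e ⊢
    linear_combination (-16) * e
  · exact (by fun_prop : Continuous fun x => Real.cos (4*π*x)^2).intervalIntegrable _ _

lemma ftc_sc (s t : ℝ) : ∫ x in s..t, Real.sin (2*π*x) * Real.cos (4*π*x)
    = (Real.cos (2*π*t)/(4*π) - Real.cos (6*π*t)/(12*π))
      - (Real.cos (2*π*s)/(4*π) - Real.cos (6*π*s)/(12*π)) := by
  apply intervalIntegral.integral_eq_sub_of_hasDerivAt
  · intro x _
    have h := ((hasDerivAt_cos_mul (2*π) x).div_const (4*π)).sub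
      ((hasDerivAt_cos_mul (6*π) x).div_const (12*π))
    convert h using 1
    · rfl
    have e1 : Real.sin (6*π*x)
        = Real.sin (2*π*x) * Real.cos (4*π*x) + Real.cos (2*π*x) * Real.sin (4*π*x) := by
      rw [show 6*π*x = 2*π*x + 4*π*x by ring, Real.sin_add]
    have e2 : Real.sin (2*π*x)
        = Real.sin (4*π*x) * Real.cos (2*π*x) - Real.cos (4*π*x) * Real.sin (2*π*x) := by
      conv_lhs => rw [show 2*π*x = 4*π*x - 2*π*x by ring, Real.sin_sub]
    field_simp
    ring_nf at e1 e2 ⊢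
    linear_combination (-24) * e1 + 24 * e2
  · exact (by fun_prop :
      Continuous fun x => Real.sin (2*π*x) * Real.cos (4*π*x)).intervalIntegrable _ _

lemma ftc_ss (s t : ℝ) : ∫ x in s..t, Real.sin (2*π*x) * Real.sin (4*π*x)
    = (Real.sin (2*π*t)/(4*π) - Real.sin (6*π*t)/(12*π))
      - (Real.sin (2*π*s)/(4*π) - Real.sin (6*π*s)/(12*π)) := by
  apply intervalIntegral.integral_eq_sub_of_hasDerivAt
  · intro x _
    have h := ((hasDerivAt_sin_mul (2*π) x).div_const (4*π)).sub
      ((hasDerivAt_sin_mul (6*π) x).div_const (12*π))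
    convert h using 1
    · rfl
    have e1 : Real.cos (6*π*x)
        = Real.cos (2*π*x) * Real.cos (4*π*x) - Real.sin (2*π*x) * Real.sin (4*π*x) := by
      rw [show 6*π*x = 2*π*x + 4*π*x by ring, Real.cos_add]
    have e2 : Real.cos (2*π*x)
        = Real.cos (4*π*x) * Real.cos (2*π*x) + Real.sin (4*π*x) * Real.sin (2*π*x) := by
      conv_lhs => rw [show 2*π*x = 4*π*x - 2*π*x by ring, Real.cos_sub]
    field_simp
    ring_nf at e1 e2 ⊢
    linear_combination 24 * e1 - 24 * e2
  · exact (by fun_prop :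
      Continuous fun x => Real.sin (2*π*x) * Real.sin (4*π*x)).intervalIntegrable _ _

lemma abs_sin_eq_on₁ {x : ℝ} (hx : x ∈ Set.uIcc (0:ℝ) (1/2)) :
    |Real.sin (2*π*x)| = Real.sin (2*π*x) := by
  rw [Set.uIcc_of_le (by norm_num)] at hx
  exact abs_of_nonneg (Real.sin_nonneg_of_nonneg_of_le_pi
    (by nlinarith [Real.pi_pos, hx.1]) (by nlinarith [Real.pi_pos, hx.2]))

lemma abs_sin_eq_on₂ {x : ℝ} (hx : x ∈ Set.uIcc (1/2:ℝ) 1) :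
    |Real.sin (2*π*x)| = -Real.sin (2*π*x) := by
  rw [Set.uIcc_of_le (by norm_num)] at hx
  have h : Real.sin (2*π*x) = -Real.sin (2*π*x - π) := by
    rw [Real.sin_sub_pi]; ring
  refine abs_of_nonpos ?_
  rw [h]
  simp only [neg_nonpos]
  exact Real.sin_nonneg_of_nonneg_of_le_pi
    (by nlinarith [Real.pi_pos, hx.1]) (by nlinarith [Real.pi_pos, hx.2])

lemma cos_pi_eval : Real.cos (2*π*(1/2:ℝ)) = -1 := by
  rw [show 2*π*(1/2:ℝ) = π by ring, Real.cos_pi]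

lemma I_abs_sin : ∫ x in (0:ℝ)..1, |Real.sin (2*π*x)| = 2/π := by
  have cont : Continuous fun x : ℝ => |Real.sin (2*π*x)| := by fun_prop
  rw [← intervalIntegral.integral_add_adjacent_intervals (a := (0:ℝ)) (b := 1/2) (c := 1)
    (cont.intervalIntegrable _ _) (cont.intervalIntegrable _ _)]
  have h1 : ∫ x in (0:ℝ)..(1/2), |Real.sin (2*π*x)| = ∫ x in (0:ℝ)..(1/2), Real.sin (2*π*x) :=
    intervalIntegral.integral_congr fun x hx => abs_sin_eq_on₁ hx
  have h2 : ∫ x in (1/2:ℝ)..1, |Real.sin (2*π*x)| = ∫ x in (1/2:ℝ)..1, -Real.sin (2*π*x) :=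
    intervalIntegral.integral_congr fun x hx => abs_sin_eq_on₂ hx
  rw [h1, h2, intervalIntegral.integral_neg, ftc_s, ftc_s]
  rw [show 2*π*(1/2:ℝ) = π by ring, show 2*π*(0:ℝ) = 0 by ring,
    show 2*π*(1:ℝ) = 0 + 2*π by ring, Real.cos_add_two_pi, Real.cos_pi, Real.cos_zero]
  field_simp
  ring

lemma I_cos : ∫ x in (0:ℝ)..1, Real.cos (4*π*x) = 0 := by
  rw [ftc_c, show 4*π*(1:ℝ) = 0 + 2*π + 2*π by ring, Real.sin_add_two_pi, Real.sin_add_two_pi,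
    show 4*π*(0:ℝ) = 0 by ring]
  simp

lemma I_cos2 : ∫ x in (0:ℝ)..1, Real.cos (4*π*x)^2 = 1/2 := by
  rw [ftc_c2, show 8*π*(1:ℝ) = 0 + 2*π + 2*π + 2*π + 2*π by ring, show 8*π*(0:ℝ) = 0 by ring]
  simp [Real.sin_add_two_pi]

lemma I_abs_sin_cos : ∫ x in (0:ℝ)..1, |Real.sin (2*π*x)| * Real.cos (4*π*x) = -(2/(3*π)) := by
  have cont : Continuous fun x : ℝ => |Real.sin (2*π*x)| * Real.cos (4*π*x) := by fun_prop
  rw [← intervalIntegral.integral_add_adjacent_intervals (a := (0:ℝ)) (b := 1/2) (c := 1)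
    (cont.intervalIntegrable _ _) (cont.intervalIntegrable _ _)]
  have h1 : ∫ x in (0:ℝ)..(1/2), |Real.sin (2*π*x)| * Real.cos (4*π*x)
      = ∫ x in (0:ℝ)..(1/2), Real.sin (2*π*x) * Real.cos (4*π*x) :=
    intervalIntegral.integral_congr fun x hx => by rw [abs_sin_eq_on₁ hx]
  have h2 : ∫ x in (1/2:ℝ)..1, |Real.sin (2*π*x)| * Real.cos (4*π*x)
      = ∫ x in (1/2:ℝ)..1, -(Real.sin (2*π*x) * Real.cos (4*π*x)) :=
    intervalIntegral.integral_congr fun x hx => by rw [abs_sin_eq_on₂ hx]; ring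
  rw [h1, h2, intervalIntegral.integral_neg, ftc_sc, ftc_sc]
  rw [show 2*π*(1/2:ℝ) = π by ring, show 6*π*(1/2:ℝ) = π + 2*π by ring,
    show 2*π*(0:ℝ) = 0 by ring, show 6*π*(0:ℝ) = 0 by ring,
    show 2*π*(1:ℝ) = 0 + 2*π by ring, show 6*π*(1:ℝ) = 0 + 2*π + 2*π + 2*π by ring,
    Real.cos_add_two_pi, Real.cos_add_two_pi, Real.cos_add_two_pi, Real.cos_add_two_pi,
    Real.cos_pi, Real.cos_zero]
  field_simp
  rw [zero_add, mul_comm π 2, Real.cos_two_pi]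
  ring

lemma I_abs_sin_sin : ∫ x in (0:ℝ)..1, |Real.sin (2*π*x)| * Real.sin (4*π*x) = 0 := by
  have cont : Continuous fun x : ℝ => |Real.sin (2*π*x)| * Real.sin (4*π*x) := by fun_prop
  rw [← intervalIntegral.integral_add_adjacent_intervals (a := (0:ℝ)) (b := 1/2) (c := 1)
    (cont.intervalIntegrable _ _) (cont.intervalIntegrable _ _)]
  have h1 : ∫ x in (0:ℝ)..(1/2), |Real.sin (2*π*x)| * Real.sin (4*π*x)
      = ∫ x in (0:ℝ)..(1/2), Real.sin (2*π*x) * Real.sin (4*π*x) :=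
    intervalIntegral.integral_congr fun x hx => by rw [abs_sin_eq_on₁ hx]
  have h2 : ∫ x in (1/2:ℝ)..1, |Real.sin (2*π*x)| * Real.sin (4*π*x)
      = ∫ x in (1/2:ℝ)..1, -(Real.sin (2*π*x) * Real.sin (4*π*x)) :=
    intervalIntegral.integral_congr fun x hx => by rw [abs_sin_eq_on₂ hx]; ring
  rw [h1, h2, intervalIntegral.integral_neg, ftc_ss, ftc_ss]
  rw [show 2*π*(1/2:ℝ) = π by ring, show 6*π*(1/2:ℝ) = π + 2*π by ring,
    show 2*π*(0:ℝ) = 0 by ring, show 6*π*(0:ℝ) = 0 by ring,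
    show 2*π*(1:ℝ) = 0 + 2*π by ring, show 6*π*(1:ℝ) = 0 + 2*π + 2*π + 2*π by ring,
    ]
  simp [Real.sin_add_two_pi]

lemma periodic_shift {f : ℝ → ℝ} (hf : Function.Periodic f 1) (y : ℝ) :
    ∫ x in (0:ℝ)..1, f (y - x) = ∫ x in (0:ℝ)..1, f x := by
  rw [intervalIntegral.integral_comp_sub_left f y]
  have := hf.intervalIntegral_add_eq (y - 1) 0
  simpa using this

lemma per_abs_sin : Function.Periodic (fun u : ℝ => |Real.sin (2*π*u)|) 1 := by
  intro u
  simp [show 2*π*(u+1) = 2*π*u + 2*π by ring, Real.sin_add_two_pi]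

lemma per_abs_sin_cos :
    Function.Periodic (fun u : ℝ => |Real.sin (2*π*u)| * Real.cos (4*π*u)) 1 := by
  intro u
  simp [show 2*π*(u+1) = 2*π*u + 2*π by ring, show 4*π*(u+1) = 4*π*u + 2*π + 2*π by ring,
    Real.sin_add_two_pi, Real.cos_add_two_pi]

lemma per_abs_sin_sin :
    Function.Periodic (fun u : ℝ => |Real.sin (2*π*u)| * Real.sin (4*π*u)) 1 := by
  intro u
  simp [show 2*π*(u+1) = 2*π*u + 2*π by ring, show 4*π*(u+1) = 4*π*u + 2*π + 2*π by ring,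
    Real.sin_add_two_pi]

lemma L1 (y : ℝ) : ∫ x in (0:ℝ)..1, |Real.sin (2*π*(y-x))| = 2/π := by
  rw [show (fun x => |Real.sin (2*π*(y-x))|) = fun x => (fun u => |Real.sin (2*π*u)|) (y-x) from rfl]
  rw [periodic_shift per_abs_sin y]
  exact I_abs_sin

lemma L2 (y : ℝ) : ∫ x in (0:ℝ)..1, |Real.sin (2*π*(y-x))| * Real.cos (4*π*x)
    = -(2/(3*π)) * Real.cos (4*π*y) := by
  have key : ∀ x : ℝ, |Real.sin (2*π*(y-x))| * Real.cos (4*π*x)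
      = Real.cos (4*π*y) * (|Real.sin (2*π*(y-x))| * Real.cos (4*π*(y-x)))
        + Real.sin (4*π*y) * (|Real.sin (2*π*(y-x))| * Real.sin (4*π*(y-x))) := by
    intro x
    have e : Real.cos (4*π*x)
        = Real.cos (4*π*y) * Real.cos (4*π*(y-x)) + Real.sin (4*π*y) * Real.sin (4*π*(y-x)) := by
      conv_lhs => rw [show 4*π*x = 4*π*y - 4*π*(y-x) by ring, Real.cos_sub]
    rw [e]; ring
  rw [intervalIntegral.integral_congr (g := fun x =>
      Real.cos (4*π*y) * (|Real.sin (2*π*(y-x))| * Real.cos (4*π*(y-x)))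
        + Real.sin (4*π*y) * (|Real.sin (2*π*(y-x))| * Real.sin (4*π*(y-x))))
      (fun x _ => key x)]
  rw [intervalIntegral.integral_add, intervalIntegral.integral_const_mul,
    intervalIntegral.integral_const_mul]
  · rw [show (fun x => |Real.sin (2*π*(y-x))| * Real.cos (4*π*(y-x)))
        = fun x => (fun u => |Real.sin (2*π*u)| * Real.cos (4*π*u)) (y-x) from rfl,
      periodic_shift per_abs_sin_cos y,
      show (fun x => |Real.sin (2*π*(y-x))| * Real.sin (4*π*(y-x)))
        = fun x => (fun u => |Real.sin (2*π*u)| * Real.sin (4*π*u)) (y-x) from rfl,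
      periodic_shift per_abs_sin_sin y, I_abs_sin_cos, I_abs_sin_sin]
    ring
  · exact ((by fun_prop : Continuous fun x =>
      Real.cos (4*π*y) * (|Real.sin (2*π*(y-x))| * Real.cos (4*π*(y-x))))).intervalIntegrable _ _
  · exact ((by fun_prop : Continuous fun x =>
      Real.sin (4*π*y) * (|Real.sin (2*π*(y-x))| * Real.sin (4*π*(y-x))))).intervalIntegrable _ _

lemma log_ineq {x : ℝ} (hx : |x| ≤ 1/2) :
    (1+x) * Real.log (1+x) ≤ x + x^2/2 + x^2 * |x| := by
  have hx1 : -(1/2) ≤ x := neg_le_of_abs_le hx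
  have hx2 : x ≤ 1/2 := le_of_abs_le hx
  -- derivative fact
  have hder : ∀ t ∈ Set.uIcc (0:ℝ) x, HasDerivAt (fun t => (1+t) * Real.log (1+t) - t)
      (Real.log (1+t)) t := by
    intro t ht
    have htpos : (0:ℝ) < 1 + t := by
      rcases Set.mem_uIcc.mp ht with h | h <;> nlinarith [h.1, h.2]
    have h1 : HasDerivAt (fun t : ℝ => 1 + t) 1 t := by
      simpa using (hasDerivAt_id t).const_add 1
    have h2 : HasDerivAt (fun t : ℝ => Real.log (1+t)) (1+t)⁻¹ t :=
      (Real.hasDerivAt_log (ne_of_gt htpos)).comp t h1 |>.congr_deriv (by simp)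
    have := (h1.mul h2).sub (hasDerivAt_id t)
    refine this.congr_deriv ?_
    field_simp
    ring
  have hint : IntervalIntegrable (fun t => Real.log (1+t)) volume 0 x := by
    apply ContinuousOn.intervalIntegrable
    apply ContinuousOn.log
    · fun_prop
    · intro t ht
      rcases Set.mem_uIcc.mp ht with h | h <;> nlinarith [h.1, h.2]
  have key := intervalIntegral.integral_eq_sub_of_hasDerivAt hder hint
  simp only [Real.log_one, add_zero, mul_zero, sub_zero, mul_one, zero_sub] at key
  -- key : ∫ t in 0..x, log (1+t) = (1+x) * log (1+x) - x  (roughly)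
  rcases le_or_gt 0 x with hx0 | hx0
  · -- nonnegative case
    have mono : ∫ t in (0:ℝ)..x, Real.log (1+t) ≤ ∫ t in (0:ℝ)..x, t := by
      apply intervalIntegral.integral_mono_on hx0 hint
        (intervalIntegral.intervalIntegrable_id)
      intro t ht
      have h1 : (0:ℝ) < 1 + t := by nlinarith [ht.1]
      have := Real.log_le_sub_one_of_pos h1
      linarith
    rw [integral_id] at mono
    rw [key] at mono
    nlinarith [abs_nonneg x, sq_nonneg x, mul_nonneg (sq_nonneg x) (abs_nonneg x)]
  · -- negative case
    have hxabs : |x| = -x := abs_of_neg hx0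
    have hptwise : ∀ t ∈ Set.Icc x 0, t - 2*t^2 ≤ Real.log (1+t) := by
      intro t ht
      have h1 : (0:ℝ) < 1 + t := by nlinarith [ht.1]
      rw [Real.le_log_iff_exp_le h1]
      have ha := Real.add_one_le_exp (-(t-2*t^2))
      have hprod : Real.exp (t-2*t^2) * Real.exp (-(t-2*t^2)) = 1 := by
        rw [← Real.exp_add]; simp
      have hpos := Real.exp_pos (t-2*t^2)
      have h2 : (1+t) * (1 - (t-2*t^2)) ≥ 1 := by nlinarith [ht.1, ht.2]
      nlinarith [ht.1, ht.2]
    have hint2 : IntervalIntegrable (fun t => Real.log (1+t)) volume x 0 := by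
      apply ContinuousOn.intervalIntegrable
      apply ContinuousOn.log
      · fun_prop
      · intro t ht
        rw [Set.uIcc_of_le hx0.le] at ht
        nlinarith [ht.1]
    have mono : ∫ t in x..(0:ℝ), (t - 2*t^2) ≤ ∫ t in x..(0:ℝ), Real.log (1+t) := by
      apply intervalIntegral.integral_mono_on hx0.le _ hint2 hptwise
      apply Continuous.intervalIntegrable
      fun_prop
    have hval : ∫ t in x..(0:ℝ), (t - 2*t^2) = -x^2/2 + 2*x^3/3 := by
      rw [intervalIntegral.integral_sub intervalIntegral.intervalIntegrable_id
        ((by fun_prop : Continuous fun t : ℝ => 2*t^2).intervalIntegrable _ _),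
        integral_id, intervalIntegral.integral_const_mul, integral_pow]
      norm_num
      ring
    rw [hval] at mono
    have hsymm : ∫ t in (0:ℝ)..x, Real.log (1+t) = -∫ t in x..(0:ℝ), Real.log (1+t) :=
      intervalIntegral.integral_symm x 0
    rw [hsymm] at key
    nlinarith [key, mono]

/-- **Doi–Onsager model, supercritical regime.** For every `K > 3π/4` there exists a
continuous probability density `q` on the circle with
`∫ q log q + K ∫∫ |sin(2π(θ−θ'))| q(θ) q(θ') < 2K/π`; i.e. the uniform density is not
a global minimizer of the Doi–Onsager free energy. -/
theorem doi_onsager_supercritical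
    (K : ℝ) (hK : 3 * π / 4 < K) :
    ∃ q : UnitAddCircle → ℝ, Continuous q ∧ (∀ θ, 0 ≤ q θ) ∧
      (∫ θ, q θ ∂circleMeasure = 1) ∧
      (∫ θ, q θ * Real.log (q θ) ∂circleMeasure) +
          K * (∫ θ, (∫ θ', absSin (θ - θ') * q θ * q θ' ∂circleMeasure) ∂circleMeasure)
        < 2 * K / π := by
  have hπ := Real.pi_pos
  set ε : ℝ := min (1/2) ((4*K - 3*π)/(12*π)) with hεdef
  have hε0 : 0 < ε := lt_min (by norm_num) (by apply div_pos <;> nlinarith)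
  have hε2 : ε ≤ 1/2 := min_le_left _ _
  have hεK : ε ≤ (4*K - 3*π)/(12*π) := min_le_right _ _
  set q : UnitAddCircle → ℝ := fun θ => 1 + ε * (fourier 2 θ).re with hqdef
  have hq_coe : ∀ x : ℝ, q ↑x = 1 + ε * Real.cos (4*π*x) := fun x => by
    show 1 + ε * (fourier 2 (x : UnitAddCircle)).re = _
    rw [cos2_coe]
  have hq_pos : ∀ x : ℝ, (1:ℝ)/2 ≤ q ↑x := by
    intro x
    rw [hq_coe x]
    nlinarith [Real.neg_one_le_cos (4*π*x), Real.cos_le_one (4*π*x)]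
  refine ⟨q, ?_, ?_, ?_, ?_⟩
  · exact continuous_const.add (continuous_const.mul
      (Complex.continuous_re.comp (fourier 2).continuous))
  · intro θ
    obtain ⟨y, rfl⟩ := QuotientAddGroup.mk_surjective θ
    exact le_trans (by norm_num : (0:ℝ) ≤ 1/2) (hq_pos y)
  · rw [circle_integral q]
    have hcongr : ∀ x ∈ Set.uIcc (0:ℝ) 1, q ↑x = 1 + ε * Real.cos (4*π*x) :=
      fun x _ => hq_coe x
    rw [intervalIntegral.integral_congr hcongr,
      intervalIntegral.integral_add (intervalIntegrable_const)
        ((by fun_prop : Continuous fun x : ℝ => ε * Real.cos (4*π*x)).intervalIntegrable _ _),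
      intervalIntegral.integral_const_mul, I_cos]
    simp
  · -- main inequality
    have hinner : ∀ θ, (∫ θ', absSin (θ - θ') * q θ * q θ' ∂circleMeasure)
        = q θ * (2/π - 2*ε/(3*π) * (fourier 2 θ).re) := by
      intro θ
      obtain ⟨y, rfl⟩ := QuotientAddGroup.mk_surjective θ
      show (∫ θ', absSin ((y:ℝ) - θ' : UnitAddCircle) * q ↑y * q θ' ∂circleMeasure)
          = q ↑y * (2/π - 2*ε/(3*π) * (fourier 2 (y:ℝ)).re)
      rw [circle_integral (fun θ' => absSin (((y:ℝ):UnitAddCircle) - θ') * q ↑y * q θ')]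
      have hcongr : ∀ x ∈ Set.uIcc (0:ℝ) 1,
          absSin (((y:ℝ):UnitAddCircle) - ↑x) * q ↑y * q ↑x
          = q ↑y * (|Real.sin (2*π*(y-x))|
              + ε * (|Real.sin (2*π*(y-x))| * Real.cos (4*π*x))) := by
        intro x _
        have hsub : (((y:ℝ):UnitAddCircle) - ↑x) = ((y - x : ℝ) : UnitAddCircle) := by
          norm_cast
        rw [hsub, absSin_coe, hq_coe x]
        ring
      rw [intervalIntegral.integral_congr hcongr, intervalIntegral.integral_const_mul,
        intervalIntegral.integral_add
          ((by fun_prop : Continuous fun x : ℝ =>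
            |Real.sin (2*π*(y-x))|).intervalIntegrable _ _)
          ((by fun_prop : Continuous fun x : ℝ =>
            ε * (|Real.sin (2*π*(y-x))| * Real.cos (4*π*x))).intervalIntegrable _ _),
        intervalIntegral.integral_const_mul, L1 y, L2 y, cos2_coe]
      ring
    have houter : (∫ θ, (∫ θ', absSin (θ - θ') * q θ * q θ' ∂circleMeasure) ∂circleMeasure)
        = 2/π - ε^2/(3*π) := by
      simp only [hinner]
      rw [circle_integral (fun θ => q θ * (2/π - 2*ε/(3*π) * (fourier 2 θ).re))]
      have hcongr2 : ∀ x ∈ Set.uIcc (0:ℝ) 1,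
          q ↑x * (2/π - 2*ε/(3*π) * (fourier 2 ((x:ℝ):UnitAddCircle)).re)
          = 2/π + (2*ε/π - 2*ε/(3*π)) * Real.cos (4*π*x)
            + (-(2*ε^2/(3*π))) * Real.cos (4*π*x)^2 := by
        intro x _
        rw [hq_coe x, cos2_coe]
        ring
      rw [intervalIntegral.integral_congr hcongr2,
        intervalIntegral.integral_add
          (((by fun_prop : Continuous fun x : ℝ => 2/π + (2*ε/π - 2*ε/(3*π))
            * Real.cos (4*π*x))).intervalIntegrable _ _)
          ((by fun_prop : Continuous fun x : ℝ =>
            (-(2*ε^2/(3*π))) * Real.cos (4*π*x)^2).intervalIntegrable _ _),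
        intervalIntegral.integral_add intervalIntegrable_const
          ((by fun_prop : Continuous fun x : ℝ =>
            (2*ε/π - 2*ε/(3*π)) * Real.cos (4*π*x)).intervalIntegrable _ _),
        intervalIntegral.integral_const_mul, intervalIntegral.integral_const_mul,
        I_cos, I_cos2]
      simp
      ring
    have hqc : Continuous fun x : ℝ => q ↑x := by
      have : Continuous q := continuous_const.add (continuous_const.mul
        (Complex.continuous_re.comp (fourier 2).continuous))
      exact this.comp (AddCircle.continuous_mk' 1)
    have hent : (∫ θ, q θ * Real.log (q θ) ∂circleMeasure) ≤ ε^2 * (1/2 + ε) / 2 := by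
      rw [circle_integral (fun θ => q θ * Real.log (q θ))]
      have hmono : ∫ x in (0:ℝ)..1, q ↑x * Real.log (q ↑x)
          ≤ ∫ x in (0:ℝ)..1,
            (ε * Real.cos (4*π*x) + (1/2 + ε) * (ε * Real.cos (4*π*x))^2) := by
        apply intervalIntegral.integral_mono_on (by norm_num)
        · exact (hqc.mul (hqc.log (fun x => by
            have := hq_pos x; positivity))).intervalIntegrable _ _
        · exact (by fun_prop : Continuous fun x : ℝ =>
            ε * Real.cos (4*π*x) + (1/2 + ε) * (ε * Real.cos (4*π*x))^2).intervalIntegrable _ _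
        · intro x _
          rw [hq_coe x]
          set u := ε * Real.cos (4*π*x) with hu
          have hu2 : |u| ≤ ε := by
            rw [hu, abs_mul, abs_of_pos hε0]
            nlinarith [Real.abs_cos_le_one (4*π*x), hε0.le]
          have hu3 : |u| ≤ 1/2 := le_trans hu2 hε2
          have h := log_ineq hu3
          have habs : u^2 * |u| ≤ u^2 * ε :=
            mul_le_mul_of_nonneg_left hu2 (sq_nonneg u)
          nlinarith [h, habs]
      have hval : ∫ x in (0:ℝ)..1,
          (ε * Real.cos (4*π*x) + (1/2 + ε) * (ε * Real.cos (4*π*x))^2)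
          = ε^2 * (1/2 + ε) / 2 := by
        have hcongr3 : ∀ x ∈ Set.uIcc (0:ℝ) 1,
            ε * Real.cos (4*π*x) + (1/2 + ε) * (ε * Real.cos (4*π*x))^2
            = ε * Real.cos (4*π*x) + ((1/2 + ε) * ε^2) * Real.cos (4*π*x)^2 := by
          intro x _; ring
        rw [intervalIntegral.integral_congr hcongr3,
          intervalIntegral.integral_add
            ((by fun_prop : Continuous fun x : ℝ =>
              ε * Real.cos (4*π*x)).intervalIntegrable _ _)
            ((by fun_prop : Continuous fun x : ℝ =>
              ((1/2 + ε) * ε^2) * Real.cos (4*π*x)^2).intervalIntegrable _ _),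
          intervalIntegral.integral_const_mul, intervalIntegral.integral_const_mul,
          I_cos, I_cos2]
        ring
      rw [hval] at hmono
      exact hmono
    rw [houter]
    have h2 : K * (2/π - ε^2/(3*π)) = 2*K/π - K*ε^2/(3*π) := by ring
    have hεK' : ε * (12*π) ≤ 4*K - 3*π := by
      rw [← le_div_iff₀ (by positivity : (0:ℝ) < 12*π)]
      exact hεK
    have h4 : 3*π/4 + 3*π*ε/2 < K := by nlinarith [mul_pos hπ hε0]
    have hsq : (0:ℝ) < ε^2 := by positivity
    have h5 : ε^2 * (1/2 + ε) / 2 < K * ε^2 / (3*π) := by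
      rw [lt_div_iff₀ (by positivity : (0:ℝ) < 3*π)]
      nlinarith [mul_lt_mul_of_pos_right h4 hsq]
    linarith [hent, h5, h2.ge, h2.le]
end
end

section
/- For every real R > 0 and every integer ℓ ≥ 1, one has ℓR − sin(ℓR) ≤ ℓ³ (R − sin R). Equivalently, the Fourier coefficients Ŵ_R(ℓ) = (2/(πℓ³))(ℓR − sin(ℓR)) of the Hegselmann–Krause interaction satisfy Ŵ_R(ℓ) ≤ Ŵ_R(1) for all ℓ ≥ 1, so the linear stability threshold is K_#(R) = 1/(2Ŵ_R(1)) = π/(4(R − sin R)). -/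
open Real

lemma abs_sin_nat_mul_le (n : ℕ) (x : ℝ) : |Real.sin (n * x)| ≤ n * |Real.sin x| := by
  induction n with
  | zero => simp
  | succ n ih =>
    have : Real.sin ((n + 1 : ℕ) * x) = Real.sin (n * x) * Real.cos x
        + Real.cos (n * x) * Real.sin x := by
      push_cast
      rw [add_mul, one_mul, Real.sin_add]
    rw [this]
    calc |Real.sin (n * x) * Real.cos x + Real.cos (n * x) * Real.sin x|
        ≤ |Real.sin (n * x) * Real.cos x| + |Real.cos (n * x) * Real.sin x| := abs_add_le _ _
      _ ≤ |Real.sin (n * x)| * 1 + 1 * |Real.sin x| := by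
          rw [abs_mul, abs_mul]
          gcongr
          · exact Real.abs_cos_le_one x
          · exact Real.abs_cos_le_one _
      _ ≤ n * |Real.sin x| * 1 + 1 * |Real.sin x| := by gcongr
      _ = (n + 1 : ℕ) * |Real.sin x| := by push_cast; ring

lemma one_sub_cos_nat_mul_le (n : ℕ) (x : ℝ) :
    1 - Real.cos (n * x) ≤ (n : ℝ) ^ 2 * (1 - Real.cos x) := by
  have h1 : ∀ y : ℝ, 1 - Real.cos y = 2 * Real.sin (y / 2) ^ 2 := by
    intro y
    have hc := Real.cos_two_mul' (y / 2)
    rw [show 2 * (y / 2) = y by ring] at hc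
    have hp := Real.sin_sq_add_cos_sq (y / 2)
    linarith
  rw [h1, h1]
  have h2 : |Real.sin ((n : ℝ) * x / 2)| ≤ n * |Real.sin (x / 2)| := by
    have := abs_sin_nat_mul_le n (x / 2)
    rw [show (n : ℝ) * x / 2 = n * (x / 2) by ring]
    exact this
  have h3 : Real.sin ((n : ℝ) * x / 2) ^ 2 ≤ (n : ℝ) ^ 2 * Real.sin (x / 2) ^ 2 := by
    have := sq_le_sq' (by linarith [abs_nonneg (Real.sin ((n:ℝ) * x / 2)), neg_abs_le (Real.sin ((n:ℝ) * x / 2))]) h2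
    calc Real.sin ((n : ℝ) * x / 2) ^ 2 = |Real.sin ((n : ℝ) * x / 2)| ^ 2 := (sq_abs _).symm
      _ ≤ ((n : ℝ) * |Real.sin (x / 2)|) ^ 2 := by
          apply pow_le_pow_left₀ (abs_nonneg _) h2
      _ = (n : ℝ) ^ 2 * Real.sin (x / 2) ^ 2 := by rw [mul_pow, sq_abs]
  linarith

/-- **Monotonicity of the Hegselmann–Krause Fourier coefficients.** For every `R > 0`
and every integer `ℓ ≥ 1`, `ℓR − sin(ℓR) ≤ ℓ³(R − sin R)`; equivalently, the Fourier
coefficients `Ŵ_R(ℓ) = (2/(πℓ³))(ℓR − sin(ℓR))` satisfy `Ŵ_R(ℓ) ≤ Ŵ_R(1)`, so the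
linear stability threshold is `K_#(R) = π/(4(R − sin R))`. -/
theorem HK_coeff_le_first (R : ℝ) (hR : 0 < R) (ℓ : ℕ) (hℓ : 1 ≤ ℓ) :
    (ℓ : ℝ) * R - Real.sin (ℓ * R) ≤ (ℓ : ℝ) ^ 3 * (R - Real.sin R) := by
  set g : ℝ → ℝ := fun t => (ℓ : ℝ) ^ 3 * (t - Real.sin t) - ((ℓ : ℝ) * t - Real.sin (ℓ * t))
    with hg
  have hderiv : ∀ t : ℝ, HasDerivAt g
      ((ℓ : ℝ) ^ 3 * (1 - Real.cos t) - ((ℓ : ℝ) * (1 - Real.cos (ℓ * t)))) t := by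
    intro t
    have h1 : HasDerivAt (fun t : ℝ => Real.sin t) (Real.cos t) t := Real.hasDerivAt_sin t
    have h2 : HasDerivAt (fun t : ℝ => Real.sin ((ℓ : ℝ) * t))
        (Real.cos ((ℓ : ℝ) * t) * (ℓ : ℝ)) t := by
      have := (Real.hasDerivAt_sin ((ℓ : ℝ) * t)).comp t
        ((hasDerivAt_id t).const_mul (ℓ : ℝ))
      simpa [Function.comp_def] using this
    have h3 : HasDerivAt (fun t : ℝ => (ℓ : ℝ) ^ 3 * (t - Real.sin t))
        ((ℓ : ℝ) ^ 3 * (1 - Real.cos t)) t := ((hasDerivAt_id t).sub h1).const_mul _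
    have h4 : HasDerivAt (fun t : ℝ => (ℓ : ℝ) * t - Real.sin ((ℓ : ℝ) * t))
        ((ℓ : ℝ) - Real.cos ((ℓ : ℝ) * t) * (ℓ : ℝ)) t := by
      simpa [Pi.sub_def] using ((hasDerivAt_id t).const_mul (ℓ : ℝ)).sub h2
    have := h3.sub h4
    exact this.congr_deriv (by ring)
  have hmono : Monotone g := by
    apply monotone_of_deriv_nonneg
    · exact fun t => (hderiv t).differentiableAt
    · intro t
      rw [(hderiv t).deriv]
      have h5 := one_sub_cos_nat_mul_le ℓ t
      have hℓ1 : (1 : ℝ) ≤ (ℓ : ℝ) := by exact_mod_cast hℓ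
      nlinarith [Real.cos_le_one t, Real.neg_one_le_cos t,
        Real.cos_le_one ((ℓ : ℝ) * t), Real.neg_one_le_cos ((ℓ : ℝ) * t)]
  have h0 : g 0 = 0 := by simp [hg]
  have := hmono (le_of_lt hR)
  rw [h0] at this
  simpa [hg] using this
end

section
/- Let R ∈ (0, π] satisfy (sin R)(2 − cos R) ≤ R (equivalently R ≥ R_*, where R_* is the unique solution in (0,π) of R = (sin R)(2 − cos R)). Then for every integer ℓ ≥ 1, ℓR − sin(ℓR) ≤ ℓ² (R − sin R), and the inequality is strict for every ℓ ≥ 3. Equivalently, the Fourier coefficients of the Hegselmann–Krause interaction satisfy Ŵ_R(ℓ) ≤ Ŵ_R(1)/ℓ for all ℓ ≥ 1, strictly for ℓ ≥ 3. -/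
open Real
open scoped Real

set_option maxHeartbeats 1000000

/-- From the hypothesis, `R` must exceed `5/3`. -/
lemma HK_R_lower (R : ℝ) (hR0 : 0 < R) (hRπ : R ≤ π)
    (hR : Real.sin R * (2 - Real.cos R) ≤ R) : 5/3 < R := by
  by_contra hcon
  push_neg at hcon
  set t := R / 2 with ht
  have ht0 : 0 < t := by positivity
  have ht1 : t ≤ 5/6 := by rw [ht]; linarith
  have hx : t^2 ≤ 25/36 := by nlinarith
  have habs : |t| ≤ 1 := by rw [abs_of_pos ht0]; linarith
  have hs := Real.sin_bound habs
  have hc := Real.cos_bound habs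
  rw [abs_of_pos ht0, abs_le] at hs hc
  have hS0 : t - t^3/6 - t^4*(5/96) ≤ Real.sin t := by nlinarith [hs.1]
  have hC0 : 1 - t^2/2 - t^4*(5/96) ≤ Real.cos t := by nlinarith [hc.1]
  have hS2 : t*(1 - (121/576)*t^2) ≤ Real.sin t := by
    nlinarith [hS0, mul_nonneg (pow_pos ht0 3).le (by linarith : (0:ℝ) ≤ 5/6 - t)]
  have hC2 : 1 - (1853/3456)*t^2 ≤ Real.cos t := by
    nlinarith [hC0, mul_nonneg (sq_nonneg t) (by linarith : (0:ℝ) ≤ 25/36 - t^2)]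
  have hApos : 0 < 1 - (121/576)*t^2 := by nlinarith
  have hBpos : 0 < 1 - (1853/3456)*t^2 := by nlinarith
  have hP1pos : 0 < t*(1 - (121/576)*t^2) := by positivity
  have hsp : 0 < Real.sin t := lt_of_lt_of_le hP1pos hS2
  have hcp : 0 < Real.cos t := lt_of_lt_of_le hBpos hC2
  have hkey : (7343/5184)*t^2 ≤ 2*(t*(1 - (121/576)*t^2))^2 := by
    nlinarith [mul_nonneg (sq_nonneg t) (by linarith : (0:ℝ) ≤ 25/36 - t^2),
      mul_nonneg (sq_nonneg t) (sq_nonneg (t^2))]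
  have hQ : 1 + (7343/5184)*t^2 ≤ 1 + 2*Real.sin t^2 := by
    nlinarith [hkey, mul_le_mul hS2 hS2 hP1pos.le hsp.le]
  have hmono : t*(1 - (121/576)*t^2) * (1 - (1853/3456)*t^2) * (1 + (7343/5184)*t^2)
      ≤ Real.sin t * Real.cos t * (1 + 2*Real.sin t^2) := by
    have h1 : t*(1 - (121/576)*t^2) * (1 - (1853/3456)*t^2) ≤ Real.sin t * Real.cos t :=
      mul_le_mul hS2 hC2 hBpos.le hsp.le
    exact mul_le_mul h1 hQ (by positivity) (by positivity)
  have hquad : t < t*(1 - (121/576)*t^2) * (1 - (1853/3456)*t^2) * (1 + (7343/5184)*t^2) := by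
    nlinarith [pow_pos ht0 3,
      mul_nonneg (pow_pos ht0 3).le (by linarith : (0:ℝ) ≤ 25/36 - t^2),
      mul_nonneg (pow_pos ht0 3).le (sq_nonneg (25/36 - t^2))]
  have hR2 : R = 2 * t := by rw [ht]; ring
  have hid : Real.sin R * (2 - Real.cos R)
      = 2 * (Real.sin t * Real.cos t * (1 + 2*Real.sin t^2)) := by
    rw [hR2, Real.sin_two_mul, Real.cos_two_mul]
    nlinarith [Real.sin_sq_add_cos_sq t]
  rw [hid, hR2] at hR
  linarith

/-- **Decay of the Hegselmann–Krause Fourier coefficients for `R ≥ R_*`.** If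
`R ∈ (0, π]` satisfies `(sin R)(2 − cos R) ≤ R`, then `ℓR − sin(ℓR) ≤ ℓ²(R − sin R)`
for every integer `ℓ ≥ 1`, strictly for every `ℓ ≥ 3`; equivalently,
`Ŵ_R(ℓ) ≤ Ŵ_R(1)/ℓ` for all `ℓ ≥ 1`, strictly for `ℓ ≥ 3`. -/
theorem HK_coeff_decay (R : ℝ) (hR0 : 0 < R) (hRπ : R ≤ π)
    (hR : Real.sin R * (2 - Real.cos R) ≤ R) :
    (∀ ℓ : ℕ, 1 ≤ ℓ → (ℓ : ℝ) * R - Real.sin (ℓ * R) ≤ (ℓ : ℝ) ^ 2 * (R - Real.sin R)) ∧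
    (∀ ℓ : ℕ, 3 ≤ ℓ → (ℓ : ℝ) * R - Real.sin (ℓ * R) < (ℓ : ℝ) ^ 2 * (R - Real.sin R)) := by
  have h53 : 5/3 < R := HK_R_lower R hR0 hRπ hR
  have hstrict : ∀ ℓ : ℕ, 3 ≤ ℓ →
      (ℓ : ℝ) * R - Real.sin (ℓ * R) < (ℓ : ℝ) ^ 2 * (R - Real.sin R) := by
    intro ℓ hℓ
    have hl3 : (3 : ℝ) ≤ (ℓ : ℝ) := by exact_mod_cast hℓ
    have h1 := Real.neg_one_le_sin ((ℓ : ℝ) * R)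
    have h2 := Real.sin_le_one R
    nlinarith [mul_pos (show (0:ℝ) < (ℓ:ℝ)^2 - (ℓ:ℝ) by nlinarith)
      (show (0:ℝ) < R - 5/3 by linarith), sq_nonneg ((ℓ:ℝ) - 3),
      mul_nonneg (by nlinarith : (0:ℝ) ≤ ((ℓ:ℝ)-3)*((ℓ:ℝ)-1)) (by linarith : (0:ℝ) ≤ R - 5/3)]
  refine ⟨fun ℓ hℓ => ?_, hstrict⟩
  rcases Nat.lt_or_ge ℓ 3 with h3 | h3
  · interval_cases ℓ
    · push_cast
      rw [one_mul]
      nlinarith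
    · push_cast
      rw [Real.sin_two_mul]
      nlinarith [hR]
  · exact (hstrict ℓ h3).le
end

section
/- There exists a unique R ∈ (0, π) such that R = (sin R)(2 − cos R). (This value R_* ≈ 2.139 is the threshold between discontinuous and continuous phase transitions for the noisy Hegselmann–Krause model; the function φ(R) = R − (sin R)(2 − cos R) satisfies φ(0) = 0, is strictly decreasing on (0, π/2), strictly increasing on (π/2, π), and φ(π) > 0.) -/
open Real
open scoped Real

private noncomputable def φHK : ℝ → ℝ := fun R => R - Real.sin R * (2 - Real.cos R)

private lemma φHK_hasDerivAt (x : ℝ) :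
    HasDerivAt φHK (2 * Real.cos x * (Real.cos x - 1)) x := by
  have h : HasDerivAt φHK
      (1 - (Real.cos x * (2 - Real.cos x) + Real.sin x * Real.sin x)) x := by
    have h1 : HasDerivAt (fun R : ℝ => Real.sin R * (2 - Real.cos R))
        (Real.cos x * (2 - Real.cos x) + Real.sin x * Real.sin x) x := by
      have := (Real.hasDerivAt_sin x).mul
        ((hasDerivAt_const x (2:ℝ)).sub (Real.hasDerivAt_cos x))
      exact this.congr_deriv (by simp only [Pi.sub_apply]; ring)
    exact (hasDerivAt_id x).sub h1
  have hsq : Real.sin x * Real.sin x = 1 - Real.cos x * Real.cos x := by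
    have := Real.sin_sq_add_cos_sq x
    nlinarith
  convert h using 1
  rw [hsq]; ring

private lemma φHK_cont : Continuous φHK := by
  unfold φHK; continuity

private lemma φHK_anti : StrictAntiOn φHK (Set.Icc 0 (π/2)) := by
  apply strictAntiOn_of_hasDerivWithinAt_neg (convex_Icc _ _)
    (φHK_cont.continuousOn)
    (fun x _ => (φHK_hasDerivAt x).hasDerivWithinAt)
  intro x hx
  rw [interior_Icc] at hx
  have h1 : 0 < Real.cos x := Real.cos_pos_of_mem_Ioo ⟨by linarith [hx.1, pi_pos], hx.2⟩
  have h2 : Real.cos x < 1 := by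
    have := Real.cos_lt_cos_of_nonneg_of_le_pi (le_refl 0) (by linarith [hx.2, pi_pos]) hx.1
    simpa using this
  nlinarith

private lemma φHK_mono : StrictMonoOn φHK (Set.Icc (π/2) π) := by
  apply strictMonoOn_of_hasDerivWithinAt_pos (convex_Icc _ _)
    (φHK_cont.continuousOn)
    (fun x _ => (φHK_hasDerivAt x).hasDerivWithinAt)
  intro x hx
  rw [interior_Icc] at hx
  have h1 : Real.cos x < 0 := Real.cos_neg_of_pi_div_two_lt_of_lt hx.1 (by linarith [hx.2, pi_pos])
  nlinarith

/-- **Existence and uniqueness of the Hegselmann–Krause threshold `R_*`.** There is a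
unique `R ∈ (0, π)` with `R = (sin R)(2 − cos R)` (numerically `R_* ≈ 2.139`). -/
theorem HK_threshold_exists_unique :
    ∃! R : ℝ, R ∈ Set.Ioo 0 π ∧ R = Real.sin R * (2 - Real.cos R) := by
  have hpi2 : (π/2 : ℝ) ≤ π := by linarith [pi_pos]
  have hA : φHK (π/2) < 0 := by
    simp [φHK, Real.sin_pi_div_two, Real.cos_pi_div_two]
    linarith [pi_lt_d2]
  have hB : (0:ℝ) < φHK π := by
    simp [φHK, Real.sin_pi, Real.cos_pi]
    exact pi_pos
  -- existence via IVT on [π/2, π]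
  obtain ⟨R, hR, hRz⟩ : ∃ R ∈ Set.Ioo (π/2) π, φHK R = 0 := by
    have := intermediate_value_Ioo hpi2 (φHK_cont.continuousOn)
    have h0 : (0:ℝ) ∈ Set.Ioo (φHK (π/2)) (φHK π) := ⟨hA, hB⟩
    obtain ⟨R, hR, hRz⟩ := this h0
    exact ⟨R, hR, hRz⟩
  refine ⟨R, ⟨⟨by linarith [hR.1, pi_pos], hR.2⟩, ?_⟩, ?_⟩
  · have : R - Real.sin R * (2 - Real.cos R) = 0 := hRz
    linarith
  · rintro y ⟨⟨hy0, hyπ⟩, hy⟩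
    have hyz : φHK y = 0 := by simp [φHK]; linarith
    have hy2 : π/2 < y := by
      by_contra h
      push_neg at h
      have := φHK_anti (Set.left_mem_Icc.mpr (by linarith [pi_pos]))
        ⟨le_of_lt hy0, h⟩ hy0
      simp [φHK] at this
      linarith
    exact φHK_mono.injOn ⟨le_of_lt hy2, le_of_lt hyπ⟩
      ⟨le_of_lt hR.1, le_of_lt hR.2⟩ (by rw [hyz, hRz])
end
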